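/- arXiv:2104.00927 — 11 statements merged into one kernel-verified Lean document; each statement's English description precedes it below -/
import Mathlib

section
/- Let S ⊆ V be an independent set of H = (V,E) with |S| = k, let 𝓗 be a real inner product space, and let x be a feasible SDP solution for H in 𝓗 such that (i) Σ_{I ∈ C(V,r)} ‖x'_I‖² ≤ Σ_{I ∈ C(V,r)} ‖x_I‖² for every feasible SDP solution x' for H in 𝓗, and (ii) there exists a unit vector ê ∈ 𝓗 with ⟨ê, x_I⟩ = 0 for every nonempty I ⊆ V∖S with |I| ≤ r+1. Then Σ_{I ∈ C(S,r)} ‖x_I‖² + Σ_{I ∈ ∂(S)} ‖x_I‖² ≥ C(k,r), where C(T,r) denotes the set of r-element subsets of T, C(k,r) the binomial coefficient, and ∂(S) the set of r-element subsets of V intersecting both S and V∖S. -/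
open Finset
open scoped RealInnerProductSpace Classical
/-- Feasibility of a solution for the crude SDP for an `r`-uniform hypergraph `(V, E)`. -/
def SDPFeasible {V : Type} [DecidableEq V]
    {H : Type} [NormedAddCommGroup H] [InnerProductSpace ℝ H]
    (r : ℕ) (E : Finset (Finset V)) (x : Finset V → H) : Prop :=
  (∀ i : V, ‖x {i}‖ ^ 2 = (1 : ℝ)) ∧
  (∀ e ∈ E, ‖x e‖ ^ 2 = (0 : ℝ)) ∧
  (∀ I J : Finset V, I.Nonempty → J.Nonempty → (I ∪ J).card ≤ r + 1 →
    ⟪x I, x J⟫ = ‖x (I ∪ J)‖ ^ 2) ∧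
  (∀ (u : V) (I J : Finset V), I.Nonempty → I ⊆ J → J.card ≤ r + 1 →
    ⟪x {u}, x J⟫ ≤ ⟪x {u}, x I⟫) ∧
  (∀ (u : V) (v : Fin r → V), Function.Injective v → (∀ i, v i ≠ u) →
    1 - ‖x (insert u (Finset.image v Finset.univ))‖ ^ 2 ≤
      ∑ i : Fin r, (1 - ‖x {u, v i}‖ ^ 2))
/-- The boundary `∂(S)`: `r`-element subsets of `V` meeting both `S` and `V \ S`. -/
def boundary {V : Type} [Fintype V] [DecidableEq V] (r : ℕ) (S : Finset V) :
    Finset (Finset V) :=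
  (Finset.univ.powersetCard r).filter fun I => (I ∩ S).Nonempty ∧ (I \ S).Nonempty

theorem stmt_2 {V : Type} [Fintype V] [DecidableEq V]
    {H : Type} [NormedAddCommGroup H] [InnerProductSpace ℝ H]
    (r k : ℕ) (hr : 2 ≤ r)
    (E : Finset (Finset V)) (hE : ∀ e ∈ E, e.card = r)
    (S : Finset V) (hScard : S.card = k) (hSind : ∀ e ∈ E, ¬ e ⊆ S)
    (x : Finset V → H) (hx : SDPFeasible r E x)
    (hopt : ∀ x' : Finset V → H, SDPFeasible r E x' →
      ∑ I ∈ Finset.univ.powersetCard r, ‖x' I‖ ^ 2 ≤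
        ∑ I ∈ Finset.univ.powersetCard r, ‖x I‖ ^ 2)
    (hehat : ∃ ehat : H, ‖ehat‖ = 1 ∧ ∀ I : Finset V, I.Nonempty → I ⊆ Sᶜ →
      I.card ≤ r + 1 → ⟪ehat, x I⟫ = 0) :
    (k.choose r : ℝ) ≤
      ∑ I ∈ S.powersetCard r, ‖x I‖ ^ 2 + ∑ I ∈ boundary r S, ‖x I‖ ^ 2 := by

  classical
  obtain ⟨hx1, hx2, hx3, hx4, hx5⟩ := hx
  obtain ⟨e0, he0, he0x⟩ := hehat
  -- the modified solution
  set x' : Finset V → H := fun I => if I ⊆ S then e0 else if Disjoint I S then x I else 0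
    with hx'def
  have hsub : ∀ A : Finset V, A ⊆ S → x' A = e0 := by
    intro A h; simp [hx'def, h]
  have hdisj : ∀ A : Finset V, A.Nonempty → Disjoint A S → x' A = x A := by
    intro A hA h
    have hns : ¬ A ⊆ S := by
      obtain ⟨a, ha⟩ := hA
      intro hsub'
      exact (Finset.disjoint_left.mp h ha) (hsub' ha)
    simp [hx'def, hns, h]
  have hcr : ∀ A : Finset V, (A ∩ S).Nonempty → (A \ S).Nonempty → x' A = 0 := by
    intro A h1 h2
    have hns : ¬ A ⊆ S := Finset.sdiff_nonempty.mp h2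
    have hnd : ¬ Disjoint A S := Finset.not_disjoint_iff_nonempty_inter.mpr h1
    simp [hx'def, hns, hnd]
  have hcompl : ∀ {A : Finset V}, Disjoint A S → A ⊆ Sᶜ := by
    intro A h a ha
    simp only [Finset.mem_compl]
    exact Finset.disjoint_left.mp h ha
  have hcompl' : ∀ {A : Finset V}, A ⊆ Sᶜ → Disjoint A S := by
    intro A h
    rw [Finset.disjoint_left]
    intro a ha haS
    exact (Finset.mem_compl.mp (h ha)) haS
  have hNEi : ∀ {A : Finset V}, A.Nonempty → A ⊆ S → (A ∩ S).Nonempty := by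
    intro A ⟨a, ha⟩ h
    exact ⟨a, Finset.mem_inter.mpr ⟨ha, h ha⟩⟩
  have hNEd : ∀ {A : Finset V}, A.Nonempty → Disjoint A S → (A \ S).Nonempty := by
    intro A ⟨a, ha⟩ h
    exact ⟨a, Finset.mem_sdiff.mpr ⟨ha, Finset.disjoint_left.mp h ha⟩⟩
  have hMi : ∀ {A B : Finset V}, A ⊆ B → (A ∩ S).Nonempty → (B ∩ S).Nonempty := by
    intro A B h hA
    exact hA.mono (Finset.inter_subset_inter h Finset.Subset.rfl)
  have hMd : ∀ {A B : Finset V}, A ⊆ B → (A \ S).Nonempty → (B \ S).Nonempty := by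
    intro A B h hA
    exact hA.mono (Finset.sdiff_subset_sdiff h Finset.Subset.rfl)
  have hr1 : 2 ≤ r + 1 := by omega
  -- nonnegativity of inner products with singletons
  have hnn : ∀ (u : V) (I : Finset V), I.Nonempty → (insert u I).card ≤ r + 1 →
      (0:ℝ) ≤ ⟪x {u}, x I⟫ := by
    intro u I hI hc
    have := hx3 {u} I (Finset.singleton_nonempty u) hI
      (by rwa [← Finset.insert_eq])
    rw [this, ← Finset.insert_eq]
    positivity
  -- pair norms are at most 1
  have hpair : ∀ u v : V, ‖x {u, v}‖ ^ 2 ≤ 1 := by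
    intro u v
    have hcard : ({u, v} : Finset V).card ≤ r + 1 := by
      refine le_trans ?_ hr1
      refine le_trans (Finset.card_insert_le u {v}) ?_
      simp
    have h1 := hx4 u {u} {u, v} (Finset.singleton_nonempty u)
      (by intro a ha; simp at ha; simp [ha]) hcard
    have h2 := hx3 {u} {u, v} (Finset.singleton_nonempty u) (by simp)
      (by rwa [← Finset.insert_eq, Finset.insert_idem])
    rw [← Finset.insert_eq, Finset.insert_idem] at h2
    have h3 : ⟪x {u}, x {u}⟫ = (1:ℝ) := by
      rw [real_inner_self_eq_norm_sq, hx1 u]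
    rw [h2, h3] at h1
    exact h1
  -- feasibility of x'
  have hfeas : SDPFeasible r E x' := by
    refine ⟨?_, ?_, ?_, ?_, ?_⟩
    · -- unit vectors
      intro i
      by_cases hiS : i ∈ S
      · rw [hsub {i} (by simpa using hiS)]
        rw [he0]; norm_num
      · rw [hdisj {i} (Finset.singleton_nonempty i) (by simpa using hiS)]
        exact hx1 i
    · -- edges
      intro e he
      have hcard : e.card = r := hE e he
      have hne : e.Nonempty := Finset.card_pos.mp (by omega)
      have hns : ¬ e ⊆ S := hSind e he
      by_cases hd : Disjoint e S
      · rw [hdisj e hne hd]; exact hx2 e he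
      · rw [hcr e (Finset.not_disjoint_iff_nonempty_inter.mp hd)
          (Finset.sdiff_nonempty.mpr hns)]
        simp
    · -- inner products / consistency
      intro I J hI hJ hc
      have hIc : I.card ≤ r + 1 :=
        le_trans (Finset.card_le_card Finset.subset_union_left) hc
      have hJc : J.card ≤ r + 1 :=
        le_trans (Finset.card_le_card Finset.subset_union_right) hc
      by_cases hIS : I ⊆ S
      · by_cases hJS : J ⊆ S
        · rw [hsub I hIS, hsub J hJS, hsub (I ∪ J) (Finset.union_subset hIS hJS),
            real_inner_self_eq_norm_sq]
        · by_cases hJd : Disjoint J S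
          · rw [hsub I hIS, hdisj J hJ hJd,
              hcr (I ∪ J) (hMi Finset.subset_union_left (hNEi hI hIS))
                (hMd Finset.subset_union_right (hNEd hJ hJd)),
              he0x J hJ (hcompl hJd) hJc]
            simp
          · rw [hcr J (Finset.not_disjoint_iff_nonempty_inter.mp hJd)
                (Finset.sdiff_nonempty.mpr hJS),
              hcr (I ∪ J) (hMi Finset.subset_union_right
                (Finset.not_disjoint_iff_nonempty_inter.mp hJd))
                (hMd Finset.subset_union_right (Finset.sdiff_nonempty.mpr hJS))]
            simp
      · by_cases hId : Disjoint I S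
        · by_cases hJS : J ⊆ S
          · rw [hdisj I hI hId, hsub J hJS,
              hcr (I ∪ J) (hMi Finset.subset_union_right (hNEi hJ hJS))
                (hMd Finset.subset_union_left (hNEd hI hId)),
              real_inner_comm, he0x I hI (hcompl hId) hIc]
            simp
          · by_cases hJd : Disjoint J S
            · have hUd : Disjoint (I ∪ J) S := Finset.disjoint_union_left.mpr ⟨hId, hJd⟩
              rw [hdisj I hI hId, hdisj J hJ hJd,
                hdisj (I ∪ J) (hI.mono Finset.subset_union_left) hUd]
              exact hx3 I J hI hJ hc
            · rw [hcr J (Finset.not_disjoint_iff_nonempty_inter.mp hJd)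
                  (Finset.sdiff_nonempty.mpr hJS),
                hcr (I ∪ J) (hMi Finset.subset_union_right
                  (Finset.not_disjoint_iff_nonempty_inter.mp hJd))
                  (hMd Finset.subset_union_left (hNEd hI hId))]
              simp
        · rw [hcr I (Finset.not_disjoint_iff_nonempty_inter.mp hId)
              (Finset.sdiff_nonempty.mpr hIS),
            hcr (I ∪ J) (hMi Finset.subset_union_left
              (Finset.not_disjoint_iff_nonempty_inter.mp hId))
              (hMd Finset.subset_union_left (Finset.sdiff_nonempty.mpr hIS))]
          simp
    · -- monotonicity
      intro u I J hI hIJ hJc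
      have hJ : J.Nonempty := hI.mono hIJ
      have hIc : I.card ≤ r + 1 := le_trans (Finset.card_le_card hIJ) hJc
      by_cases huS : u ∈ S
      · rw [hsub {u} (by simpa using huS)]
        have hRHS : (0:ℝ) ≤ ⟪e0, x' I⟫ ∧ ⟪e0, x' J⟫ ≤ 1 := by
          constructor
          · by_cases hIS : I ⊆ S
            · rw [hsub I hIS, real_inner_self_eq_norm_sq, he0]; norm_num
            · by_cases hId : Disjoint I S
              · rw [hdisj I hI hId, he0x I hI (hcompl hId) hIc]
              · rw [hcr I (Finset.not_disjoint_iff_nonempty_inter.mp hId)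
                  (Finset.sdiff_nonempty.mpr hIS), inner_zero_right]
          · by_cases hJS : J ⊆ S
            · rw [hsub J hJS, real_inner_self_eq_norm_sq, he0]; norm_num
            · by_cases hJd : Disjoint J S
              · rw [hdisj J hJ hJd, he0x J hJ (hcompl hJd) hJc]; norm_num
              · rw [hcr J (Finset.not_disjoint_iff_nonempty_inter.mp hJd)
                  (Finset.sdiff_nonempty.mpr hJS), inner_zero_right]
                norm_num
        by_cases hIS : I ⊆ S
        · rw [hsub I hIS, real_inner_self_eq_norm_sq, he0]
          norm_num
          exact hRHS.2
        · by_cases hId : Disjoint I S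
          · -- I disjoint: RHS = 0; J can't be ⊆ S
            rw [hdisj I hI hId, he0x I hI (hcompl hId) hIc]
            have hJS : ¬ J ⊆ S := by
              intro h
              obtain ⟨a, ha⟩ := hI
              exact (Finset.disjoint_left.mp hId ha) (h (hIJ ha))
            by_cases hJd : Disjoint J S
            · rw [hdisj J hJ hJd, he0x J hJ (hcompl hJd) hJc]
            · rw [hcr J (Finset.not_disjoint_iff_nonempty_inter.mp hJd)
                (Finset.sdiff_nonempty.mpr hJS), inner_zero_right]
          · -- I crossing: so is J
            rw [hcr I (Finset.not_disjoint_iff_nonempty_inter.mp hId)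
                (Finset.sdiff_nonempty.mpr hIS),
              hcr J (hMi hIJ (Finset.not_disjoint_iff_nonempty_inter.mp hId))
                (hMd hIJ (Finset.sdiff_nonempty.mpr hIS)),
              inner_zero_right]
      · -- u ∉ S
        have hud : Disjoint ({u} : Finset V) S := by simpa using huS
        rw [hdisj {u} (Finset.singleton_nonempty u) hud]
        have h0 : ⟪x {u}, e0⟫ = (0:ℝ) := by
          rw [real_inner_comm]
          exact he0x {u} (Finset.singleton_nonempty u) (hcompl hud)
            (by rw [Finset.card_singleton]; omega)
        by_cases hIS : I ⊆ S
        · rw [hsub I hIS, h0]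
          by_cases hJS : J ⊆ S
          · rw [hsub J hJS, h0]
          · by_cases hJd : Disjoint J S
            · exfalso
              obtain ⟨a, ha⟩ := hI
              exact (Finset.disjoint_left.mp hJd (hIJ ha)) (hIS ha)
            · rw [hcr J (Finset.not_disjoint_iff_nonempty_inter.mp hJd)
                (Finset.sdiff_nonempty.mpr hJS), inner_zero_right]
        · by_cases hId : Disjoint I S
          · rw [hdisj I hI hId]
            by_cases hJS : J ⊆ S
            · exfalso
              obtain ⟨a, ha⟩ := hI
              exact (Finset.disjoint_left.mp hId ha) (hJS (hIJ ha))
            · by_cases hJd : Disjoint J S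
              · rw [hdisj J hJ hJd]
                exact hx4 u I J hI hIJ hJc
              · rw [hcr J (Finset.not_disjoint_iff_nonempty_inter.mp hJd)
                  (Finset.sdiff_nonempty.mpr hJS), inner_zero_right]
                -- need 0 ≤ ⟪x {u}, x I⟫; I ⊊ J so |I| ≤ r
                have hIJne : I ≠ J := by
                  intro h
                  rw [h] at hId
                  exact (Finset.not_disjoint_iff_nonempty_inter.mpr
                    (Finset.not_disjoint_iff_nonempty_inter.mp hJd)) hId
                have hIltJ : I.card < J.card := Finset.card_lt_card (lt_of_le_of_ne hIJ hIJne)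
                refine hnn u I hI ?_
                refine le_trans (Finset.card_insert_le u I) ?_
                omega
          · rw [hcr I (Finset.not_disjoint_iff_nonempty_inter.mp hId)
                (Finset.sdiff_nonempty.mpr hIS),
              hcr J (hMi hIJ (Finset.not_disjoint_iff_nonempty_inter.mp hId))
                (hMd hIJ (Finset.sdiff_nonempty.mpr hIS)),
              inner_zero_right]
    · -- sparsest-cut style inequality
      intro u v hv hvu
      set A : Finset V := insert u (Finset.image v Finset.univ) with hA
      have hAne : A.Nonempty := ⟨u, Finset.mem_insert_self u _⟩
      have hterm : ∀ i : Fin r, (0:ℝ) ≤ 1 - ‖x' {u, v i}‖ ^ 2 := by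
        intro i
        by_cases h1 : ({u, v i} : Finset V) ⊆ S
        · rw [hsub _ h1, he0]; norm_num
        · by_cases h2 : Disjoint ({u, v i} : Finset V) S
          · rw [hdisj _ (by simp) h2]
            linarith [hpair u (v i)]
          · rw [hcr _ (Finset.not_disjoint_iff_nonempty_inter.mp h2)
              (Finset.sdiff_nonempty.mpr h1)]
            norm_num
      by_cases hAS : A ⊆ S
      · rw [hsub A hAS]
        calc 1 - ‖e0‖ ^ 2 = 0 := by rw [he0]; norm_num
          _ ≤ ∑ i : Fin r, (1 - ‖x' {u, v i}‖ ^ 2) :=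
            Finset.sum_nonneg fun i _ => hterm i
      · by_cases hAd : Disjoint A S
        · have hps : ∀ i : Fin r, Disjoint ({u, v i} : Finset V) S := by
            intro i
            refine Finset.disjoint_left.mpr fun a ha haS => ?_
            refine Finset.disjoint_left.mp hAd ?_ haS
            rcases Finset.mem_insert.mp ha with h | h
            · simp [h, hA]
            · simp only [Finset.mem_singleton] at h
              subst h
              exact Finset.mem_insert.mpr (Or.inr (by simp))
          rw [hdisj A hAne hAd]
          calc 1 - ‖x A‖ ^ 2 ≤ ∑ i : Fin r, (1 - ‖x {u, v i}‖ ^ 2) := hx5 u v hv hvu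
            _ = ∑ i : Fin r, (1 - ‖x' {u, v i}‖ ^ 2) := by
              refine Finset.sum_congr rfl fun i _ => ?_
              rw [hdisj {u, v i} (by simp) (hps i)]
        · -- A crosses S
          rw [hcr A (Finset.not_disjoint_iff_nonempty_inter.mp hAd)
            (Finset.sdiff_nonempty.mpr hAS)]
          have : ∃ i : Fin r, ‖x' {u, v i}‖ ^ 2 = 0 := by
            by_cases huS : u ∈ S
            · obtain ⟨b, hb⟩ := Finset.sdiff_nonempty.mpr hAS
              rw [Finset.mem_sdiff] at hb
              obtain ⟨hbA, hbS⟩ := hb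
              rcases Finset.mem_insert.mp hbA with h | h
              · exact absurd (h ▸ huS) hbS
              · obtain ⟨i, _, hi⟩ := Finset.mem_image.mp h
                refine ⟨i, ?_⟩
                rw [hcr {u, v i} ⟨u, by simp [huS]⟩ ⟨v i, by simp [hi ▸ hbS]⟩]
                simp
            · obtain ⟨a, ha⟩ := Finset.not_disjoint_iff_nonempty_inter.mp hAd
              rw [Finset.mem_inter] at ha
              obtain ⟨haA, haS⟩ := ha
              rcases Finset.mem_insert.mp haA with h | h
              · exact absurd (h ▸ haS) huS
              · obtain ⟨i, _, hi⟩ := Finset.mem_image.mp h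
                refine ⟨i, ?_⟩
                rw [hcr {u, v i} ⟨v i, by simp [hi ▸ haS]⟩ ⟨u, by simp [huS]⟩]
                simp
          obtain ⟨i0, hi0⟩ := this
          have h1 : (1:ℝ) - ‖x' {u, v i0}‖ ^ 2 = 1 := by rw [hi0]; ring
          calc (1:ℝ) - ‖(0:H)‖ ^ 2 = 1 := by norm_num
            _ = 1 - ‖x' {u, v i0}‖ ^ 2 := h1.symm
            _ ≤ ∑ i : Fin r, (1 - ‖x' {u, v i}‖ ^ 2) :=
              Finset.single_le_sum (fun i _ => hterm i) (Finset.mem_univ i0)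
  -- now use optimality
  have hkey := hopt x' hfeas
  set T := (Finset.univ : Finset V).powersetCard r with hT
  -- split T into three pieces
  have hsplit : ∀ f : Finset V → ℝ,
      ∑ I ∈ T, f I = ∑ I ∈ S.powersetCard r, f I + ∑ I ∈ boundary r S, f I
        + ∑ I ∈ Sᶜ.powersetCard r, f I := by
    intro f
    have e1 : T.filter (fun I => I ⊆ S) = S.powersetCard r := by
      ext I
      simp only [Finset.mem_filter, hT, Finset.mem_powersetCard]
      constructor
      · rintro ⟨⟨-, hc⟩, hs⟩; exact ⟨hs, hc⟩
      · rintro ⟨hs, hc⟩; exact ⟨⟨Finset.subset_univ I, hc⟩, hs⟩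
    have e2 : (T.filter (fun I => ¬ I ⊆ S)).filter (fun I => Disjoint I S)
        = Sᶜ.powersetCard r := by
      ext I
      simp only [Finset.mem_filter, hT, Finset.mem_powersetCard]
      constructor
      · rintro ⟨⟨⟨-, hc⟩, -⟩, hd⟩; exact ⟨hcompl hd, hc⟩
      · rintro ⟨hs, hc⟩
        have hd := hcompl' hs
        have hne : I.Nonempty := Finset.card_pos.mp (by omega)
        refine ⟨⟨⟨Finset.subset_univ I, hc⟩, ?_⟩, hd⟩
        obtain ⟨a, ha⟩ := hne
        intro h
        exact (Finset.disjoint_left.mp hd ha) (h ha)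
    have e3 : (T.filter (fun I => ¬ I ⊆ S)).filter (fun I => ¬ Disjoint I S)
        = boundary r S := by
      ext I
      simp only [Finset.mem_filter, hT, Finset.mem_powersetCard, boundary]
      constructor
      · rintro ⟨⟨⟨-, hc⟩, hns⟩, hnd⟩
        exact ⟨⟨Finset.subset_univ I, hc⟩,
          Finset.not_disjoint_iff_nonempty_inter.mp hnd, Finset.sdiff_nonempty.mpr hns⟩
      · rintro ⟨⟨-, hc⟩, h1, h2⟩
        exact ⟨⟨⟨Finset.subset_univ I, hc⟩, Finset.sdiff_nonempty.mp h2⟩,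
          Finset.not_disjoint_iff_nonempty_inter.mpr h1⟩
    have h1 := Finset.sum_filter_add_sum_filter_not T (fun I => I ⊆ S) f
    have h2 := Finset.sum_filter_add_sum_filter_not (T.filter (fun I => ¬ I ⊆ S))
      (fun I => Disjoint I S) f
    rw [e1] at h1
    rw [e2, e3] at h2
    linarith
  rw [hsplit, hsplit] at hkey
  -- values of x' on each piece
  have v1 : ∑ I ∈ S.powersetCard r, ‖x' I‖ ^ 2 = (k.choose r : ℝ) := by
    have hv : ∀ I ∈ S.powersetCard r, ‖x' I‖ ^ 2 = (1:ℝ) := by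
      intro I hI
      rw [hsub I (Finset.mem_powersetCard.mp hI).1, he0]
      norm_num
    rw [Finset.sum_congr rfl hv, Finset.sum_const, Finset.card_powersetCard, hScard,
      nsmul_eq_mul, mul_one]
  have v2 : ∑ I ∈ boundary r S, ‖x' I‖ ^ 2 = 0 := by
    refine Finset.sum_eq_zero fun I hI => ?_
    simp only [boundary, Finset.mem_filter] at hI
    rw [hcr I hI.2.1 hI.2.2]
    simp
  have v3 : ∑ I ∈ Sᶜ.powersetCard r, ‖x' I‖ ^ 2 = ∑ I ∈ Sᶜ.powersetCard r, ‖x I‖ ^ 2 := by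
    refine Finset.sum_congr rfl fun I hI => ?_
    obtain ⟨hs, hc⟩ := Finset.mem_powersetCard.mp hI
    have hne : I.Nonempty := Finset.card_pos.mp (by omega)
    rw [hdisj I hne (hcompl' hs)]
  rw [v1, v2, v3] at hkey
  linarith
end

section
/- Let x be a feasible SDP solution for H = (V,E), let S ⊆ V with |S| = k ≥ r, and let ε ∈ (0,1). If Σ_{I ∈ C(S,r)} ‖x_I‖² ≥ (1 − ε/(2r))·C(k,r), then there exists a vertex u ∈ S such that the set B := {v ∈ V∖{u} : ⟨x_u, x_v⟩ ≥ 1 − 1/(2r)} is an independent set of H of cardinality at least (1 − ε)(k − 1). (This is the deterministic core of the algorithm that outputs an independent set of size (1−ε)·k in the semi-random model.) -/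
open Finset
open scoped RealInnerProductSpace Classical
lemma choose_aux (k r : ℕ) (hr : 2 ≤ r) (hkr : r ≤ k) :
    r * (r-1) * Nat.choose k r = k * (k-1) * Nat.choose (k-2) (r-2) := by
  obtain ⟨r', rfl⟩ : ∃ r', r = r' + 2 := ⟨r - 2, by omega⟩
  obtain ⟨k', rfl⟩ : ∃ k', k = k' + 2 := ⟨k - 2, by omega⟩
  simp only [Nat.add_sub_cancel]
  have h1 := Nat.add_one_mul_choose_eq (k'+1) (r'+1)
  have h2 := Nat.add_one_mul_choose_eq k' r'
  have e1 : r'+2-1 = r'+1 := rfl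
  have e2 : k'+2-1 = k'+1 := rfl
  rw [e1, e2]
  calc (r'+2)*(r'+1)*((k'+2).choose (r'+2))
      = (r'+1)*((k'+2).choose (r'+2) * (r'+2)) := by ring
    _ = (r'+1)*((k'+1+1) * (k'+1).choose (r'+1)) := by rw [← h1]
    _ = (k'+2)*((k'+1).choose (r'+1) * (r'+1)) := by ring
    _ = (k'+2)*((k'+1) * k'.choose r') := by rw [← h2]
    _ = (k'+2)*(k'+1)*k'.choose r' := by ring

lemma count_pairs {V : Type} [DecidableEq V] (S : Finset V) (r : ℕ) (hr : 2 ≤ r) (u v : V)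
    (hu : u ∈ S) (hv : v ∈ S) (huv : u ≠ v) :
    (((S.powersetCard r).filter (fun I => u ∈ I ∧ v ∈ I)).card : ℕ)
      = (S.card - 2).choose (r - 2) := by
  classical
  have hsub : ({u, v} : Finset V) ⊆ S := by
    intro a ha; simp only [mem_insert, mem_singleton] at ha; rcases ha with rfl|rfl <;> assumption
  have hcard2 : ({u, v} : Finset V).card = 2 := by
    rw [card_insert_of_notMem (by simpa using huv), card_singleton]
  have hbij : ((S.powersetCard r).filter (fun I => u ∈ I ∧ v ∈ I)).card
      = ((S \ {u, v}).powersetCard (r - 2)).card := by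
    apply Finset.card_nbij' (fun I => I \ {u, v}) (fun J => J ∪ {u, v})
    · intro I hI
      simp only [Finset.mem_coe, mem_filter, mem_powersetCard] at hI ⊢
      obtain ⟨⟨hIS, hIr⟩, hui, hvi⟩ := hI
      have huvI : ({u, v} : Finset V) ⊆ I := by
        intro a ha; simp only [mem_insert, mem_singleton] at ha; rcases ha with rfl|rfl <;> assumption
      exact ⟨sdiff_subset_sdiff hIS (le_refl _), by rw [card_sdiff_of_subset huvI, hIr, hcard2]⟩
    · intro J hJ
      simp only [Finset.mem_coe, mem_powersetCard] at hJ
      simp only [Finset.mem_coe, mem_filter, mem_powersetCard]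
      obtain ⟨hJS, hJc⟩ := hJ
      have hdisj : Disjoint J ({u, v} : Finset V) := by
        refine disjoint_left.mpr fun a haJ ha => ?_
        exact (mem_sdiff.mp (hJS haJ)).2 ha
      constructor
      constructor
      · exact union_subset (hJS.trans sdiff_subset) hsub
      · rw [card_union_of_disjoint hdisj, hJc, hcard2]; omega
      constructor
      · exact mem_union_right _ (by simp)
      · exact mem_union_right _ (by simp)
    · intro I hI
      simp only [Finset.mem_coe, mem_filter, mem_powersetCard] at hI
      obtain ⟨⟨hIS, hIr⟩, hui, hvi⟩ := hI
      have huvI : ({u, v} : Finset V) ⊆ I := by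
        intro a ha; simp only [mem_insert, mem_singleton] at ha; rcases ha with rfl|rfl <;> assumption
      exact sdiff_union_of_subset huvI
    · intro J hJ
      simp only [Finset.mem_coe, mem_powersetCard] at hJ
      have hdisj : Disjoint J ({u, v} : Finset V) := by
        refine disjoint_left.mpr fun a haJ ha => ?_
        exact (mem_sdiff.mp (hJ.1 haJ)).2 ha
      dsimp only
      rw [union_sdiff_right, sdiff_eq_self_of_disjoint hdisj]
  rw [hbij, card_powersetCard, card_sdiff_of_subset hsub, hcard2]

theorem stmt_3 {V : Type} [Fintype V] [DecidableEq V]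
    {H : Type} [NormedAddCommGroup H] [InnerProductSpace ℝ H]
    (r k : ℕ) (hr : 2 ≤ r)
    (E : Finset (Finset V)) (hE : ∀ e ∈ E, e.card = r)
    (x : Finset V → H) (hx : SDPFeasible r E x)
    (S : Finset V) (hScard : S.card = k) (hkr : r ≤ k)
    (ε : ℝ) (hε0 : 0 < ε) (hε1 : ε < 1)
    (hmass : (1 - ε / (2 * r)) * (k.choose r : ℝ) ≤
      ∑ I ∈ S.powersetCard r, ‖x I‖ ^ 2) :
    ∃ u ∈ S,
      (∀ e ∈ E,
        ¬ e ⊆ Finset.univ.filter (fun v => v ≠ u ∧ 1 - 1 / (2 * r) ≤ ⟪x {u}, x {v}⟫)) ∧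
      (1 - ε) * ((k : ℝ) - 1) ≤
        ((Finset.univ.filter
            (fun v => v ≠ u ∧ 1 - 1 / (2 * r) ≤ ⟪x {u}, x {v}⟫)).card : ℝ) := by
  classical
  obtain ⟨hnorm1, hedge, hprod, hmono, hlocal⟩ := hx
  have hr0 : (0:ℝ) < (r:ℝ) := by
    have : 0 < r := by omega
    exact_mod_cast this
  have hk2 : 2 ≤ k := le_trans hr hkr
  have hr2 : (2:ℝ) ≤ (r:ℝ) := by exact_mod_cast hr
  have hnormu : ∀ u : V, ‖x {u}‖ = 1 := fun u => by
    have h := hnorm1 u; nlinarith [norm_nonneg (x ({u} : Finset V))]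
  have hip_le_one : ∀ u v : V, ⟪x {u}, x {v}⟫ ≤ 1 := fun u v => by
    calc ⟪x {u}, x {v}⟫ ≤ ‖x ({u} : Finset V)‖ * ‖x ({v} : Finset V)‖ :=
          real_inner_le_norm _ _
    _ = 1 := by rw [hnormu, hnormu]; ring
  have hpair : ∀ u v : V, ⟪x {u}, x {v}⟫ = ‖x ({u, v} : Finset V)‖^2 := by
    intro u v
    have h := hprod {u} {v} (singleton_nonempty u) (singleton_nonempty v)
      (le_trans (card_union_le _ _) (by simp; omega))
    rwa [← insert_eq] at h
  have hself : ∀ (u : V) (I : Finset V), u ∈ I → I.card ≤ r + 1 →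
      ⟪x {u}, x I⟫ = ‖x I‖^2 := by
    intro u I hu hc
    have hun : ({u} : Finset V) ∪ I = I := union_eq_right.mpr (singleton_subset_iff.mpr hu)
    have h := hprod {u} I (singleton_nonempty u) ⟨u, hu⟩ (by rw [hun]; exact hc)
    rwa [hun] at h
  have key1 : ∀ (I : Finset V), I.card = r → ∀ u ∈ I, ∀ v ∈ I, u ≠ v →
      ‖x I‖^2 ≤ ⟪x {u}, x {v}⟫ := by
    intro I hIc u hu v hv huv
    have hIr1 : I.card ≤ r + 1 := by omega
    have e1 := hself u I hu hIr1
    have e2 : ⟪x {u}, x I⟫ ≤ ⟪x {u}, x ({u, v} : Finset V)⟫ := by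
      apply hmono u {u, v} I ⟨u, by simp⟩ _ hIr1
      intro a ha
      simp only [mem_insert, mem_singleton] at ha
      rcases ha with rfl|rfl <;> assumption
    have e3 : ⟪x {u}, x ({u, v} : Finset V)⟫ = ‖x ({u, v} : Finset V)‖^2 :=
      hself u {u, v} (by simp) (le_trans (card_insert_le _ _) (by simp; omega))
    rw [hpair u v]
    linarith [e1, e2, e3]
  -- Independence of B u for every u
  have hindep : ∀ u : V, ∀ e ∈ E,
      ¬ e ⊆ Finset.univ.filter (fun v => v ≠ u ∧ 1 - 1 / (2 * r) ≤ ⟪x {u}, x {v}⟫) := by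
    intro u e he hsub
    have her : e.card = r := hE e he
    have hnorme : ‖x e‖ = 0 := by
      have h := hedge e he; nlinarith [norm_nonneg (x e)]
    have hgood : ∀ v ∈ e, v ≠ u ∧ 1 - 1 / (2 * r) ≤ ⟪x {u}, x {v}⟫ := by
      intro v hv
      have := hsub hv
      simpa using this
    have hue : u ∉ e := fun h => (hgood u h).1 rfl
    -- enumerate e
    set f : Fin r → V := fun i => (e.equivFin.symm (Fin.cast her.symm i) : V) with hf
    have hfm : ∀ i, f i ∈ e := fun i => (e.equivFin.symm (Fin.cast her.symm i)).2
    have hfinj : Function.Injective f := by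
      intro a b hab
      have h1 : e.equivFin.symm (Fin.cast her.symm a) = e.equivFin.symm (Fin.cast her.symm b) :=
        Subtype.coe_injective hab
      have h2 := e.equivFin.symm.injective h1
      exact Fin.cast_injective _ h2
    have hfim : Finset.image f Finset.univ = e := by
      apply Finset.eq_of_subset_of_card_le
      · intro a ha
        obtain ⟨i, _, rfl⟩ := Finset.mem_image.mp ha
        exact hfm i
      · rw [Finset.card_image_of_injective _ hfinj, Finset.card_univ, Fintype.card_fin, her]
    have hfne : ∀ i, f i ≠ u := fun i h => hue (h ▸ hfm i)
    have h5 := hlocal u f hfinj hfne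
    rw [hfim] at h5
    have hene : e.Nonempty := by
      rw [← Finset.card_pos, her]; omega
    have hinsc : (({u} : Finset V) ∪ e).card ≤ r + 1 := by
      rw [← insert_eq, card_insert_of_notMem hue, her]
    have h7 := hprod {u} e (singleton_nonempty u) hene hinsc
    rw [← insert_eq] at h7
    have h8 : ⟪x {u}, x e⟫ ≤ 0 := by
      calc ⟪x {u}, x e⟫ ≤ ‖x ({u} : Finset V)‖ * ‖x e‖ := real_inner_le_norm _ _
      _ = 0 := by rw [hnorme]; ring
    have h6 : ‖x (insert u e)‖^2 = 0 :=
      le_antisymm (h7 ▸ h8) (sq_nonneg _)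
    rw [h6] at h5
    have h9 : ∀ i : Fin r, (1 - ‖x ({u, f i} : Finset V)‖^2) ≤ 1/(2*(r:ℝ)) := by
      intro i
      have h10 := (hgood (f i) (hfm i)).2
      rw [hpair u (f i)] at h10
      linarith
    have h10 : ∑ i : Fin r, (1 - ‖x ({u, f i} : Finset V)‖^2) ≤ (r:ℝ) * (1/(2*(r:ℝ))) := by
      calc ∑ i : Fin r, (1 - ‖x ({u, f i} : Finset V)‖^2)
          ≤ ∑ _i : Fin r, 1/(2*(r:ℝ)) := Finset.sum_le_sum (fun i _ => h9 i)
      _ = (r:ℝ) * (1/(2*(r:ℝ))) := by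
          rw [Finset.sum_const, Finset.card_univ, Fintype.card_fin, nsmul_eq_mul]
    have h11 : (r:ℝ) * (1/(2*(r:ℝ))) = 1/2 := by field_simp
    linarith
  -- Counting part
  set P := S.powersetCard r with hP
  set c2 : ℝ := ((k-2).choose (r-2) : ℝ) with hc2def
  have hc2 : 0 < c2 := by
    have h : 0 < (k-2).choose (r-2) := Nat.choose_pos (by omega)
    rw [hc2def]
    exact_mod_cast h
  -- inner double counting equality
  have inner_eq : ∀ I ∈ P, ∑ u ∈ I, ∑ v ∈ I.erase u, (1 - ⟪x {u}, x {v}⟫)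
      = ∑ u ∈ S, ∑ v ∈ S.erase u,
          (if u ∈ I ∧ v ∈ I then (1 - ⟪x {u}, x {v}⟫) else 0) := by
    intro I hI
    have hIS : I ⊆ S := (mem_powersetCard.mp hI).1
    rw [← Finset.sum_subset hIS (fun u _ hu =>
      Finset.sum_eq_zero (fun v _ => by simp [hu]))]
    apply Finset.sum_congr rfl
    intro u hu
    have hsub2 : I.erase u ⊆ S.erase u := erase_subset_erase _ hIS
    rw [← Finset.sum_subset hsub2 (fun v hv hvn => by
      have : v ∉ I := by
        intro hvI
        exact hvn (Finset.mem_erase.mpr ⟨(Finset.mem_erase.mp hv).1, hvI⟩)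
      simp [this])]
    apply Finset.sum_congr rfl
    intro v hv
    have hvI : v ∈ I := Finset.mem_of_mem_erase hv
    simp [hu, hvI]
  have hdc : ∑ I ∈ P, ∑ u ∈ I, ∑ v ∈ I.erase u, (1 - ⟪x {u}, x {v}⟫)
      = c2 * ∑ u ∈ S, ∑ v ∈ S.erase u, (1 - ⟪x {u}, x {v}⟫) := by
    rw [Finset.sum_congr rfl inner_eq, Finset.sum_comm]
    rw [Finset.mul_sum]
    apply Finset.sum_congr rfl
    intro u hu
    rw [Finset.sum_comm, Finset.mul_sum]
    apply Finset.sum_congr rfl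
    intro v hv
    rw [← Finset.sum_filter, Finset.sum_const, nsmul_eq_mul]
    congr 1
    rw [hc2def]
    norm_cast
    rw [count_pairs S r hr u v hu (Finset.mem_of_mem_erase hv)
      (Ne.symm (Finset.ne_of_mem_erase hv)), hScard]
  -- upper bound on the triple sum
  have hB : ∑ I ∈ P, ∑ u ∈ I, ∑ v ∈ I.erase u, (1 - ⟪x {u}, x {v}⟫)
      ≤ (r:ℝ) * ((r:ℝ)-1) * (ε/(2*(r:ℝ)) * (k.choose r : ℝ)) := by
    have h1 : ∀ I ∈ P, ∑ u ∈ I, ∑ v ∈ I.erase u, (1 - ⟪x {u}, x {v}⟫)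
        ≤ (r:ℝ)*((r:ℝ)-1)*(1 - ‖x I‖^2) := by
      intro I hI
      obtain ⟨hIS, hIr⟩ := mem_powersetCard.mp hI
      have step : ∑ u ∈ I, ∑ v ∈ I.erase u, (1 - ⟪x {u}, x {v}⟫)
          ≤ ∑ u ∈ I, ∑ _v ∈ I.erase u, (1 - ‖x I‖^2) := by
        apply Finset.sum_le_sum
        intro u hu
        apply Finset.sum_le_sum
        intro v hv
        have hk := key1 I hIr u hu v (Finset.mem_of_mem_erase hv)
          (Ne.symm (Finset.ne_of_mem_erase hv))
        linarith
      refine le_trans step (le_of_eq ?_)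
      have hinner : ∀ u ∈ I, ∑ _v ∈ I.erase u, (1 - ‖x I‖^2)
          = ((r:ℝ)-1)*(1 - ‖x I‖^2) := by
        intro u hu
        rw [Finset.sum_const, card_erase_of_mem hu, hIr, nsmul_eq_mul]
        congr 1
        push_cast [Nat.cast_sub (by omega : 1 ≤ r)]
        ring
      rw [Finset.sum_congr rfl hinner, Finset.sum_const, hIr, nsmul_eq_mul]
      ring
    have h2 : ∑ I ∈ P, ∑ u ∈ I, ∑ v ∈ I.erase u, (1 - ⟪x {u}, x {v}⟫)
        ≤ ∑ I ∈ P, (r:ℝ)*((r:ℝ)-1)*(1 - ‖x I‖^2) := Finset.sum_le_sum h1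
    have h3 : ∑ I ∈ P, (r:ℝ)*((r:ℝ)-1)*(1 - ‖x I‖^2)
        = (r:ℝ)*((r:ℝ)-1)*((k.choose r : ℝ) - ∑ I ∈ P, ‖x I‖^2) := by
      rw [← Finset.mul_sum]
      congr 1
      rw [Finset.sum_sub_distrib, Finset.sum_const, nsmul_eq_mul, mul_one]
      congr 2
      rw [hP, card_powersetCard, hScard]
    have h4 : (k.choose r : ℝ) - ∑ I ∈ P, ‖x I‖^2 ≤ ε/(2*(r:ℝ)) * (k.choose r : ℝ) := by
      have := hmass
      rw [hP]
      nlinarith [hmass]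
    have h5 : (0:ℝ) ≤ (r:ℝ)*((r:ℝ)-1) := by nlinarith [hr2]
    calc ∑ I ∈ P, ∑ u ∈ I, ∑ v ∈ I.erase u, (1 - ⟪x {u}, x {v}⟫)
        ≤ (r:ℝ)*((r:ℝ)-1)*((k.choose r : ℝ) - ∑ I ∈ P, ‖x I‖^2) := h2.trans (le_of_eq h3)
    _ ≤ (r:ℝ) * ((r:ℝ)-1) * (ε/(2*(r:ℝ)) * (k.choose r : ℝ)) :=
        mul_le_mul_of_nonneg_left h4 h5
  -- cast choose identity
  have hid : (r:ℝ)*((r:ℝ)-1)*(k.choose r : ℝ) = (k:ℝ)*((k:ℝ)-1)*c2 := by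
    have h := choose_aux k r hr hkr
    have : ((r * (r-1) * Nat.choose k r : ℕ) : ℝ)
        = ((k * (k-1) * Nat.choose (k-2) (r-2) : ℕ) : ℝ) := by exact_mod_cast h
    push_cast [Nat.cast_sub (by omega : 1 ≤ r), Nat.cast_sub (by omega : 1 ≤ k)] at this
    rw [hc2def]
    push_cast
    linarith [this]
  -- bound on T
  have hT : ∑ u ∈ S, ∑ v ∈ S.erase u, (1 - ⟪x {u}, x {v}⟫)
      ≤ ε/(2*(r:ℝ)) * ((k:ℝ)*((k:ℝ)-1)) := by
    have hmul : c2 * (∑ u ∈ S, ∑ v ∈ S.erase u, (1 - ⟪x {u}, x {v}⟫))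
        ≤ c2 * (ε/(2*(r:ℝ)) * ((k:ℝ)*((k:ℝ)-1))) := by
      rw [← hdc]
      refine hB.trans (le_of_eq ?_)
      linear_combination (ε/(2*(r:ℝ))) * hid
    exact le_of_mul_le_mul_left hmul hc2
  -- per-vertex bad degree
  have hf0 : ∀ u v : V, 0 ≤ 1 - ⟪x {u}, x {v}⟫ := fun u v => by
    linarith [hip_le_one u v]
  have hcard_le : ∀ u ∈ S,
      ((((S.erase u).filter (fun v => ¬ (1 - 1/(2*(r:ℝ)) ≤ ⟪x {u}, x {v}⟫))).card : ℝ))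
        ≤ 2*(r:ℝ) * ∑ v ∈ S.erase u, (1 - ⟪x {u}, x {v}⟫) := by
    intro u _
    have h1 : ((((S.erase u).filter (fun v => ¬ (1 - 1/(2*(r:ℝ)) ≤ ⟪x {u}, x {v}⟫))).card : ℝ))
        = ∑ _v ∈ (S.erase u).filter (fun v => ¬ (1 - 1/(2*(r:ℝ)) ≤ ⟪x {u}, x {v}⟫)), (1:ℝ) := by
      rw [Finset.sum_const, nsmul_eq_mul, mul_one]
    rw [h1]
    calc ∑ _v ∈ (S.erase u).filter (fun v => ¬ (1 - 1/(2*(r:ℝ)) ≤ ⟪x {u}, x {v}⟫)), (1:ℝ)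
        ≤ ∑ v ∈ (S.erase u).filter (fun v => ¬ (1 - 1/(2*(r:ℝ)) ≤ ⟪x {u}, x {v}⟫)),
            2*(r:ℝ)*(1 - ⟪x {u}, x {v}⟫) := by
          apply Finset.sum_le_sum
          intro v hv
          have hbad := (Finset.mem_filter.mp hv).2
          push_neg at hbad
          have hb2 : 1/(2*(r:ℝ)) ≤ 1 - ⟪x {u}, x {v}⟫ := by linarith
          have hb3 : 2*(r:ℝ) * (1/(2*(r:ℝ))) ≤ 2*(r:ℝ)*(1 - ⟪x {u}, x {v}⟫) :=
            mul_le_mul_of_nonneg_left hb2 (by positivity)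
          have hb4 : 2*(r:ℝ) * (1/(2*(r:ℝ))) = 1 := by field_simp
          linarith
    _ ≤ ∑ v ∈ S.erase u, 2*(r:ℝ)*(1 - ⟪x {u}, x {v}⟫) := by
          apply Finset.sum_le_sum_of_subset_of_nonneg (Finset.filter_subset _ _)
          intro v _ _
          exact mul_nonneg (by positivity) (hf0 u v)
    _ = 2*(r:ℝ) * ∑ v ∈ S.erase u, (1 - ⟪x {u}, x {v}⟫) := by rw [Finset.mul_sum]
  have hsum_all : ∑ u ∈ S,
      ((((S.erase u).filter (fun v => ¬ (1 - 1/(2*(r:ℝ)) ≤ ⟪x {u}, x {v}⟫))).card : ℝ))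
        ≤ ε * (k:ℝ) * ((k:ℝ)-1) := by
    calc ∑ u ∈ S, ((((S.erase u).filter (fun v => ¬ (1 - 1/(2*(r:ℝ)) ≤ ⟪x {u}, x {v}⟫))).card : ℝ))
        ≤ ∑ u ∈ S, 2*(r:ℝ) * ∑ v ∈ S.erase u, (1 - ⟪x {u}, x {v}⟫) :=
          Finset.sum_le_sum hcard_le
    _ = 2*(r:ℝ) * ∑ u ∈ S, ∑ v ∈ S.erase u, (1 - ⟪x {u}, x {v}⟫) := by rw [Finset.mul_sum]
    _ ≤ 2*(r:ℝ) * (ε/(2*(r:ℝ)) * ((k:ℝ)*((k:ℝ)-1))) :=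
          mul_le_mul_of_nonneg_left hT (by positivity)
    _ = ε * (k:ℝ) * ((k:ℝ)-1) := by field_simp
  -- find a good vertex
  have hSne : S.Nonempty := by
    rw [← Finset.card_pos, hScard]; omega
  have hexists : ∃ u ∈ S,
      ((((S.erase u).filter (fun v => ¬ (1 - 1/(2*(r:ℝ)) ≤ ⟪x {u}, x {v}⟫))).card : ℝ))
        ≤ ε * ((k:ℝ)-1) := by
    by_contra hcon
    have hcon' : ∀ u ∈ S, ε * ((k:ℝ)-1)
        < ((((S.erase u).filter (fun v => ¬ (1 - 1/(2*(r:ℝ)) ≤ ⟪x {u}, x {v}⟫))).card : ℝ)) :=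
      fun u hu => lt_of_not_ge (fun h => hcon ⟨u, hu, h⟩)
    have hstrict : ∑ u ∈ S, ε * ((k:ℝ)-1)
        < ∑ u ∈ S, ((((S.erase u).filter (fun v => ¬ (1 - 1/(2*(r:ℝ)) ≤ ⟪x {u}, x {v}⟫))).card : ℝ)) :=
      Finset.sum_lt_sum_of_nonempty hSne (fun u hu => hcon' u hu)
    rw [Finset.sum_const, hScard, nsmul_eq_mul] at hstrict
    have hring : (k:ℝ)*(ε*((k:ℝ)-1)) = ε*(k:ℝ)*((k:ℝ)-1) := by ring
    linarith
  obtain ⟨u, huS, hDu⟩ := hexists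
  refine ⟨u, huS, hindep u, ?_⟩
  -- final cardinality bound
  set good := (S.erase u).filter (fun v => 1 - 1/(2*(r:ℝ)) ≤ ⟪x {u}, x {v}⟫) with hgood
  have hsubB : good ⊆ Finset.univ.filter (fun v => v ≠ u ∧ 1 - 1 / (2 * r) ≤ ⟪x {u}, x {v}⟫) := by
    intro v hv
    obtain ⟨hv1, hv2⟩ := Finset.mem_filter.mp hv
    refine Finset.mem_filter.mpr ⟨Finset.mem_univ _, (Finset.mem_erase.mp hv1).1, ?_⟩
    exact hv2
  have hcards : good.card
      + ((S.erase u).filter (fun v => ¬ (1 - 1/(2*(r:ℝ)) ≤ ⟪x {u}, x {v}⟫))).card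
      = k - 1 := by
    rw [hgood, Finset.card_filter_add_card_filter_not, card_erase_of_mem huS, hScard]
  have hk1cast : ((k - 1 : ℕ) : ℝ) = (k:ℝ) - 1 := by
    push_cast [Nat.cast_sub (by omega : 1 ≤ k)]
    ring
  have hcards' : (good.card : ℝ)
      + ((((S.erase u).filter (fun v => ¬ (1 - 1/(2*(r:ℝ)) ≤ ⟪x {u}, x {v}⟫))).card : ℝ))
      = (k:ℝ) - 1 := by
    rw [← hk1cast]
    exact_mod_cast hcards
  have hgoodge : (1 - ε) * ((k:ℝ) - 1) ≤ (good.card : ℝ) := by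
    have hring : (1-ε)*((k:ℝ)-1) = ((k:ℝ)-1) - ε*((k:ℝ)-1) := by ring
    linarith [hDu, hcards']
  have hle : (good.card : ℝ)
      ≤ ((Finset.univ.filter (fun v => v ≠ u ∧ 1 - 1 / (2 * r) ≤ ⟪x {u}, x {v}⟫)).card : ℝ) := by
    exact_mod_cast Finset.card_le_card hsubB
  linarith
end

section
/- Let x be a feasible SDP solution for H = (V,E) and let S ⊆ V with |S| = k ≥ r. Then: (a) there exists u ∈ S such that (1/C(k−1,r−1))·Σ_{I ∈ C(S∖{u}, r−1)} ⟨x_u, x_I⟩ ≥ (1/C(k,r))·Σ_{I ∈ C(S,r)} ‖x_I‖²; and (b) there exists u ∈ S such that (1/(k−1))·Σ_{v ∈ S∖{u}} ⟨x_u, x_v⟩ ≥ (1/C(k,r))·Σ_{I ∈ C(S,r)} ‖x_I‖². Here C(T,i) denotes the set of i-element subsets of T and C(k,r), C(k−1,r−1) are binomial coefficients. -/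
open Finset

lemma pair_sum {α : Type*} [DecidableEq α] (T : Finset α) (m : ℕ) (hm : 1 ≤ m)
    (g : α → Finset α → ℝ) :
    ∑ I ∈ T.powersetCard m, ∑ v ∈ I, g v I
      = ∑ v ∈ T, ∑ I ∈ (T.erase v).powersetCard (m - 1), g v (insert v I) := by
  rw [Finset.sum_sigma', Finset.sum_sigma']
  refine Finset.sum_nbij' (fun p => ⟨p.2, p.1.erase p.2⟩) (fun p => ⟨insert p.1 p.2, p.1⟩)
    ?_ ?_ ?_ ?_ ?_
  · rintro ⟨I, v⟩ hp
    simp only [Finset.mem_sigma, mem_powersetCard] at hp ⊢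
    obtain ⟨⟨hIT, hIc⟩, hvI⟩ := hp
    exact ⟨hIT hvI, erase_subset_erase _ hIT, by rw [card_erase_of_mem hvI, hIc]⟩
  · rintro ⟨v, I⟩ hp
    simp only [Finset.mem_sigma, mem_powersetCard] at hp ⊢
    obtain ⟨hvT, hIT, hIc⟩ := hp
    have hvI : v ∉ I := fun h => notMem_erase v T (hIT h)
    refine ⟨⟨insert_subset hvT ((hIT.trans (erase_subset _ _))), ?_⟩, mem_insert_self _ _⟩
    rw [card_insert_of_notMem hvI, hIc]; omega
  · rintro ⟨I, v⟩ hp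
    simp only [Finset.mem_sigma, mem_powersetCard] at hp
    simp [insert_erase hp.2]
  · rintro ⟨v, I⟩ hp
    simp only [Finset.mem_sigma, mem_powersetCard] at hp
    have hvI : v ∉ I := fun h => notMem_erase v T (hp.2.1 h)
    simp [erase_insert hvI]
  · rintro ⟨I, v⟩ hp
    simp only [Finset.mem_sigma, mem_powersetCard] at hp
    simp [insert_erase hp.2]

open Finset
open scoped RealInnerProductSpace Classical
theorem stmt_5 {V : Type} [Fintype V] [DecidableEq V]
    {H : Type} [NormedAddCommGroup H] [InnerProductSpace ℝ H]
    (r k : ℕ) (hr : 2 ≤ r)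
    (E : Finset (Finset V)) (hE : ∀ e ∈ E, e.card = r)
    (x : Finset V → H) (hx : SDPFeasible r E x)
    (S : Finset V) (hScard : S.card = k) (hkr : r ≤ k) :
    (∃ u ∈ S,
      (1 / ((k.choose r : ℝ))) * ∑ I ∈ S.powersetCard r, ‖x I‖ ^ 2 ≤
        (1 / (((k - 1).choose (r - 1) : ℕ) : ℝ)) *
          ∑ I ∈ (S.erase u).powersetCard (r - 1), ⟪x {u}, x I⟫) ∧
    (∃ u ∈ S,
      (1 / ((k.choose r : ℝ))) * ∑ I ∈ S.powersetCard r, ‖x I‖ ^ 2 ≤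
        (1 / ((k : ℝ) - 1)) * ∑ v ∈ S.erase u, ⟪x {u}, x {v}⟫) := by
  obtain ⟨h1, h2, h3, h4, h5⟩ := hx
  have hk2 : 2 ≤ k := hr.trans hkr
  have hSne : S.Nonempty := by rw [← Finset.card_pos, hScard]; omega
  set T : ℝ := ∑ I ∈ S.powersetCard r, ‖x I‖ ^ 2 with hT
  have hc1 : (0:ℝ) < (k.choose r : ℝ) := by exact_mod_cast Nat.choose_pos hkr
  have hc2 : (0:ℝ) < (((k-1).choose (r-1) : ℕ) : ℝ) := by
    exact_mod_cast Nat.choose_pos (by omega)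
  set c1 : ℝ := (k.choose r : ℝ)
  set c2 : ℝ := (((k-1).choose (r-1) : ℕ) : ℝ)
  -- the averaging identity
  have hsum : ∑ u ∈ S, (∑ I ∈ (S.erase u).powersetCard (r-1), ⟪x {u}, x I⟫)
      = (r : ℝ) * T := by
    have step1 : ∀ u ∈ S, ∑ I ∈ (S.erase u).powersetCard (r-1), ⟪x {u}, x I⟫
        = ∑ I ∈ (S.erase u).powersetCard (r-1), ‖x (insert u I)‖ ^ 2 := by
      intro u hu
      refine Finset.sum_congr rfl fun I hI => ?_
      rw [mem_powersetCard] at hI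
      have hune : u ∉ I := fun h => notMem_erase u S (hI.1 h)
      have hIne : I.Nonempty := Finset.card_pos.mp (by omega)
      have hcard : ({u} ∪ I).card ≤ r + 1 := by
        rw [← insert_eq, card_insert_of_notMem hune]; omega
      rw [h3 {u} I (singleton_nonempty u) hIne hcard, ← insert_eq]
    rw [Finset.sum_congr rfl step1, ← pair_sum S r (by omega) (fun _ J => ‖x J‖ ^ 2)]
    rw [hT, Finset.mul_sum]
    refine Finset.sum_congr rfl fun J hJ => ?_
    rw [mem_powersetCard] at hJ
    rw [Finset.sum_const, hJ.2, nsmul_eq_mul]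
  -- pick u achieving at least the average
  have hkpos : (0:ℝ) < (k:ℝ) := by positivity
  obtain ⟨u, huS, hu⟩ : ∃ u ∈ S, (r:ℝ) * T / k ≤
      ∑ I ∈ (S.erase u).powersetCard (r-1), ⟪x {u}, x I⟫ := by
    apply Finset.exists_le_of_sum_le hSne
    rw [Finset.sum_const, hScard, nsmul_eq_mul, hsum]
    rw [mul_comm, div_mul_cancel₀ _ (ne_of_gt hkpos)]
  set fu : ℝ := ∑ I ∈ (S.erase u).powersetCard (r-1), ⟪x {u}, x I⟫ with hfu
  -- key binomial identity
  have hid : (k:ℝ) * c2 = (r:ℝ) * c1 := by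
    have h := Nat.add_one_mul_choose_eq (k-1) (r-1)
    rw [(by omega : k - 1 + 1 = k), (by omega : r - 1 + 1 = r)] at h
    have h' := congrArg (Nat.cast : ℕ → ℝ) h
    push_cast at h'
    linarith
  have parta : (1 / c1) * T ≤ (1 / c2) * fu := by
    have heq : (1 / c1) * T = (1 / c2) * ((r:ℝ) * T / k) := by
      field_simp
      linear_combination T * hid
    rw [heq]
    exact mul_le_mul_of_nonneg_left hu (by positivity)
  refine ⟨⟨u, huS, parta⟩, ⟨u, huS, ?_⟩⟩
  -- part (b)
  set B : ℝ := ∑ v ∈ S.erase u, ⟪x {u}, x {v}⟫ with hB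
  have hc3 : (0:ℝ) < (((k-2).choose (r-2) : ℕ) : ℝ) := by
    exact_mod_cast Nat.choose_pos (by omega : r - 2 ≤ k - 2)
  set c3 : ℝ := (((k-2).choose (r-2) : ℕ) : ℝ)
  have hkey : ((r:ℝ) - 1) * fu ≤ c3 * B := by
    have step : ((r:ℝ) - 1) * fu ≤ ∑ I ∈ (S.erase u).powersetCard (r-1),
        ∑ v ∈ I, ⟪x {u}, x {v}⟫ := by
      rw [hfu, Finset.mul_sum]
      refine Finset.sum_le_sum fun I hI => ?_
      rw [mem_powersetCard] at hI
      have : ((r:ℝ) - 1) * ⟪x {u}, x I⟫ = ∑ v ∈ I, ⟪x {u}, x I⟫ := by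
        rw [Finset.sum_const, hI.2, nsmul_eq_mul]
        push_cast [Nat.cast_sub (by omega : 1 ≤ r)]
        ring
      rw [this]
      refine Finset.sum_le_sum fun v hv => ?_
      exact h4 u {v} I (singleton_nonempty v) (singleton_subset_iff.mpr hv) (by omega)
    refine step.trans ?_
    rw [pair_sum (S.erase u) (r-1) (by omega) (fun v _ => ⟪x {u}, x {v}⟫), hB,
      Finset.mul_sum]
    refine le_of_eq (Finset.sum_congr rfl fun v hv => ?_)
    rw [Finset.sum_const, card_powersetCard, card_erase_of_mem hv,
      card_erase_of_mem huS, hScard, nsmul_eq_mul]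
    have : k - 1 - 1 = k - 2 := by omega
    have h2 : r - 1 - 1 = r - 2 := by omega
    rw [this, h2]
  have hid2 : ((k:ℝ) - 1) * c3 = ((r:ℝ) - 1) * c2 := by
    have h := Nat.add_one_mul_choose_eq (k-2) (r-2)
    rw [(by omega : k - 2 + 1 = k - 1), (by omega : r - 2 + 1 = r - 1)] at h
    have h' := congrArg (Nat.cast : ℕ → ℝ) h
    push_cast [Nat.cast_sub (by omega : 1 ≤ k), Nat.cast_sub (by omega : 1 ≤ r)] at h'
    linarith
  have hk1 : (0:ℝ) < (k:ℝ) - 1 := by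
    have : (2:ℝ) ≤ (k:ℝ) := by exact_mod_cast hk2
    linarith
  have hr1 : (0:ℝ) < (r:ℝ) - 1 := by
    have : (2:ℝ) ≤ (r:ℝ) := by exact_mod_cast hr
    linarith
  have partb : (1 / c2) * fu ≤ (1 / ((k:ℝ) - 1)) * B := by
    have heq : ((k:ℝ)-1) * (c3 * B) = ((r:ℝ)-1) * (c2 * B) := by
      linear_combination B * hid2
    rw [div_mul_eq_mul_div, div_mul_eq_mul_div, div_le_div_iff₀ hc2 hk1, one_mul, one_mul]
    nlinarith [mul_le_mul_of_nonneg_left hkey hk1.le, heq, hr1]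
  exact parta.trans partb
end

section
/- Let x be a feasible SDP solution for H = (V,E) and let u ∈ V. If v₁, …, v_r are r pairwise distinct vertices of V, all distinct from u, with ⟨x_u, x_{v_i}⟩ ≥ 1 − 1/(2r) for every i ∈ [r], then ‖x_{{v₁,…,v_r}}‖² ≥ 1/2; in particular {v₁,…,v_r} ∉ E. Consequently the set {v ∈ V∖{u} : ⟨x_u, x_v⟩ ≥ 1 − 1/(2r)} is an independent set of H. -/
open Finset
open scoped RealInnerProductSpace Classical
lemma key_half {V : Type} [DecidableEq V]
    {H : Type} [NormedAddCommGroup H] [InnerProductSpace ℝ H]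
    (r : ℕ) (hr : 2 ≤ r)
    (E : Finset (Finset V))
    (x : Finset V → H) (hx : SDPFeasible r E x)
    (u : V) (v : Fin r → V) (hv : Function.Injective v) (hvu : ∀ i, v i ≠ u)
    (hproj : ∀ i, 1 - 1 / (2 * r) ≤ ⟪x {u}, x {v i}⟫) :
    1 / 2 ≤ ‖x (Finset.image v Finset.univ)‖ ^ 2 := by
  obtain ⟨h1, h2, h3, h4, h5⟩ := hx
  set S : Finset V := Finset.image v Finset.univ with hS
  have hrpos : (0:ℝ) < r := by
    have : (2:ℝ) ≤ r := by exact_mod_cast hr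
    linarith
  have hSne : S.Nonempty := ⟨v ⟨0, by omega⟩, Finset.mem_image.mpr ⟨_, Finset.mem_univ _, rfl⟩⟩
  have hScard : S.card ≤ r := Finset.card_image_le.trans (by simp)
  have hTcard : (insert u S).card ≤ r + 1 := (Finset.card_insert_le _ _).trans (by omega)
  have hpair : ∀ i : Fin r, 1 - ‖x {u, v i}‖ ^ 2 ≤ 1 / (2 * (r:ℝ)) := by
    intro i
    have hc : (({u} : Finset V) ∪ {v i}).card ≤ r + 1 := by
      refine (Finset.card_union_le _ _).trans ?_
      simp; omega
    have h := h3 {u} {v i} (Finset.singleton_nonempty _) (Finset.singleton_nonempty _) hc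
    have hu : ({u} : Finset V) ∪ {v i} = {u, v i} := (Finset.insert_eq u {v i}).symm
    rw [hu] at h
    have := hproj i
    linarith
  have hsum : ∑ i : Fin r, (1 - ‖x {u, v i}‖ ^ 2) ≤ 1 / 2 := by
    calc ∑ i : Fin r, (1 - ‖x {u, v i}‖ ^ 2)
        ≤ ∑ _i : Fin r, 1 / (2 * (r:ℝ)) := Finset.sum_le_sum (fun i _ => hpair i)
      _ = (r:ℝ) * (1 / (2 * (r:ℝ))) := by
          rw [Finset.sum_const]; simp [nsmul_eq_mul]
      _ = 1 / 2 := by field_simp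
  have hT2 : 1 / 2 ≤ ‖x (insert u S)‖ ^ 2 := by
    have := h5 u v hv hvu
    rw [← hS] at this
    linarith
  have hunion : S ∪ insert u S = insert u S :=
    Finset.union_eq_right.mpr (Finset.subset_insert u S)
  have hinner := h3 S (insert u S) hSne ⟨u, Finset.mem_insert_self u S⟩
    (by rw [hunion]; exact hTcard)
  rw [hunion] at hinner
  have hcs := real_inner_le_norm (x S) (x (insert u S))
  nlinarith [norm_nonneg (x S), norm_nonneg (x (insert u S)),
    sq_nonneg (‖x S‖ - ‖x (insert u S)‖)]

theorem stmt_7 {V : Type} [Fintype V] [DecidableEq V]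
    {H : Type} [NormedAddCommGroup H] [InnerProductSpace ℝ H]
    (r : ℕ) (hr : 2 ≤ r) (hn : r + 1 ≤ Fintype.card V)
    (E : Finset (Finset V)) (hE : ∀ e ∈ E, e.card = r)
    (x : Finset V → H) (hx : SDPFeasible r E x)
    (u : V) (v : Fin r → V) (hv : Function.Injective v) (hvu : ∀ i, v i ≠ u)
    (hproj : ∀ i, 1 - 1 / (2 * r) ≤ ⟪x {u}, x {v i}⟫) :
    1 / 2 ≤ ‖x (Finset.image v Finset.univ)‖ ^ 2 ∧
    Finset.image v Finset.univ ∉ E ∧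
    ∀ e ∈ E,
      ¬ e ⊆ Finset.univ.filter (fun w => w ≠ u ∧ 1 - 1 / (2 * r) ≤ ⟪x {u}, x {w}⟫) := by
  have hhalf := key_half r hr E x hx u v hv hvu hproj
  refine ⟨hhalf, ?_, ?_⟩
  · intro hmem
    have := hx.2.1 _ hmem
    linarith
  · intro e heE hsub
    have hcard := hE e heE
    set g : Fin r ≃ e := (finCongr hcard.symm).trans e.equivFin.symm with hg
    set w : Fin r → V := fun i => (g i : V) with hw
    have hwinj : Function.Injective w := fun a b h => g.injective (Subtype.ext h)
    have hwmem : ∀ i, w i ∈ e := fun i => (g i).2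
    have hwim : Finset.image w Finset.univ = e := by
      apply Finset.eq_of_subset_of_card_le
      · intro a ha
        obtain ⟨i, _, rfl⟩ := Finset.mem_image.mp ha
        exact hwmem i
      · rw [Finset.card_image_of_injective _ hwinj]
        simp [hcard]
    have hfilt : ∀ i, w i ≠ u ∧ 1 - 1 / (2 * r) ≤ ⟪x {u}, x {w i}⟫ := fun i =>
      (Finset.mem_filter.mp (hsub (hwmem i))).2
    have := key_half r hr E x hx u w hwinj (fun i => (hfilt i).1) (fun i => (hfilt i).2)
    rw [hwim] at this
    have := hx.2.1 e heE
    linarith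
end

section
/- Let x be a feasible SDP solution for H = (V,E) and let S ⊆ V with |S| = k ≥ r. Set σ := Σ_{I ∈ C(S,r)} ‖x_I‖². Then there exists a vertex u ∈ S such that the number of (r−1)-element subsets I of S∖{u} with ⟨x_u, x_I⟩ ≥ 3/4 is at least C(k−1, r−1)·(1 − 4·(1 − σ/C(k,r))). Here C(T,i) denotes the set of i-element subsets of T and C(k,r), C(k−1,r−1) are binomial coefficients. -/
open Finset
open scoped RealInnerProductSpace Classical
theorem stmt_8 {V : Type} [Fintype V] [DecidableEq V]
    {H : Type} [NormedAddCommGroup H] [InnerProductSpace ℝ H]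
    (r k : ℕ) (hr : 2 ≤ r)
    (E : Finset (Finset V)) (hE : ∀ e ∈ E, e.card = r)
    (x : Finset V → H) (hx : SDPFeasible r E x)
    (S : Finset V) (hScard : S.card = k) (hkr : r ≤ k) :
    ∃ u ∈ S,
      (((k - 1).choose (r - 1) : ℝ)) *
          (1 - 4 * (1 - (∑ I ∈ S.powersetCard r, ‖x I‖ ^ 2) / (k.choose r : ℝ))) ≤
        ((((S.erase u).powersetCard (r - 1)).filter
            (fun I => (3 : ℝ) / 4 ≤ ⟪x {u}, x I⟫)).card : ℝ) := by
  classical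
  obtain ⟨h1, h2, h3, h4, h5⟩ := hx
  have hk1 : 1 ≤ k := by omega
  have hr1 : 1 ≤ r := by omega
  set P := S.powersetCard r with hP
  set T := P.filter (fun J => (3:ℝ)/4 ≤ ‖x J‖ ^ 2) with hT
  set σ := ∑ I ∈ P, ‖x I‖ ^ 2 with hσ
  set m := k.choose r with hm
  have hm0 : 0 < m := Nat.choose_pos hkr
  have hPcard : P.card = m := by rw [hP, Finset.card_powersetCard, hScard]
  -- each norm squared is at most 1
  have hnorm_le : ∀ J ∈ P, ‖x J‖ ^ 2 ≤ 1 := by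
    intro J hJ
    rw [hP, Finset.mem_powersetCard] at hJ
    obtain ⟨hJS, hJc⟩ := hJ
    obtain ⟨u, hu⟩ : J.Nonempty := Finset.card_pos.mp (by omega)
    have hunion : {u} ∪ J = J := Finset.union_eq_right.mpr (Finset.singleton_subset_iff.mpr hu)
    have e1 : ⟪x {u}, x J⟫ = ‖x J‖ ^ 2 := by
      have := h3 {u} J (Finset.singleton_nonempty u) ⟨u, hu⟩ (by rw [hunion]; omega)
      rwa [hunion] at this
    have e2 : ⟪x {u}, x J⟫ ≤ ⟪x {u}, x {u}⟫ :=
      h4 u {u} J (Finset.singleton_nonempty u) (Finset.singleton_subset_iff.mpr hu) (by omega)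
    have e3 : ⟪x {u}, x {u}⟫ = 1 := by
      rw [real_inner_self_eq_norm_sq]; exact h1 u
    linarith
  -- Markov bound
  have hmarkov : (m : ℝ) * (1 - 4 * (1 - σ / m)) ≤ T.card := by
    have hsplit : ∑ J ∈ T, ‖x J‖ ^ 2
        + ∑ J ∈ P.filter (fun J => ¬ ((3:ℝ)/4 ≤ ‖x J‖ ^ 2)), ‖x J‖ ^ 2 = σ :=
      Finset.sum_filter_add_sum_filter_not P _ _
    have hA : ∑ J ∈ T, ‖x J‖ ^ 2 ≤ (T.card : ℝ) := by
      calc ∑ J ∈ T, ‖x J‖ ^ 2 ≤ ∑ _J ∈ T, (1:ℝ) :=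
            Finset.sum_le_sum (fun J hJ => hnorm_le J (Finset.mem_of_mem_filter J hJ))
        _ = T.card := by simp
    have hB : ∑ J ∈ P.filter (fun J => ¬ ((3:ℝ)/4 ≤ ‖x J‖ ^ 2)), ‖x J‖ ^ 2
        ≤ (3:ℝ)/4 * ((P.filter (fun J => ¬ ((3:ℝ)/4 ≤ ‖x J‖ ^ 2))).card : ℝ) := by
      calc ∑ J ∈ P.filter (fun J => ¬ ((3:ℝ)/4 ≤ ‖x J‖ ^ 2)), ‖x J‖ ^ 2
          ≤ ∑ _J ∈ P.filter (fun J => ¬ ((3:ℝ)/4 ≤ ‖x J‖ ^ 2)), (3:ℝ)/4 := by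
            apply Finset.sum_le_sum
            intro J hJ
            have := (Finset.mem_filter.mp hJ).2
            linarith [not_le.mp this]
        _ = _ := by rw [Finset.sum_const, nsmul_eq_mul, mul_comm]
    have hcards : T.card + (P.filter (fun J => ¬ ((3:ℝ)/4 ≤ ‖x J‖ ^ 2))).card = m := by
      rw [← hPcard, hT]; exact Finset.card_filter_add_card_filter_not _
    have hcardsR : (T.card : ℝ) + ((P.filter (fun J => ¬ ((3:ℝ)/4 ≤ ‖x J‖ ^ 2))).card : ℝ)
        = (m : ℝ) := by exact_mod_cast congrArg (Nat.cast (R := ℝ)) hcards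
    have hm0R : (0:ℝ) < (m : ℝ) := by exact_mod_cast hm0
    have hdiv : (m : ℝ) * (σ / m) = σ := by field_simp
    nlinarith [hA, hB, hcardsR, hdiv]
  -- bijection between the two counts for each u
  have hbij : ∀ u ∈ S,
      (((S.erase u).powersetCard (r-1)).filter
          (fun I => (3:ℝ)/4 ≤ ⟪x {u}, x I⟫)).card
        = (T.filter (fun J => u ∈ J)).card := by
    intro u hu
    apply Finset.card_bij (fun I _ => insert u I)
    · intro I hI
      simp only [Finset.mem_filter, Finset.mem_powersetCard] at hI
      obtain ⟨⟨hIsub, hIc⟩, hIip⟩ := hI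
      have huI : u ∉ I := fun h => (Finset.mem_erase.mp (hIsub h)).1 rfl
      have hins_sub : insert u I ⊆ S :=
        Finset.insert_subset hu (hIsub.trans (Finset.erase_subset u S))
      have hc : (insert u I).card = r := by
        rw [Finset.card_insert_of_notMem huI]; omega
      have heq : ⟪x {u}, x I⟫ = ‖x (insert u I)‖ ^ 2 := by
        have hIne : I.Nonempty := Finset.card_pos.mp (by omega)
        have := h3 {u} I (Finset.singleton_nonempty u) hIne
          (by rw [← Finset.insert_eq]; omega)
        rwa [← Finset.insert_eq] at this
      simp only [Finset.mem_filter, hT, hP, Finset.mem_powersetCard]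
      exact ⟨⟨⟨hins_sub, hc⟩, heq ▸ hIip⟩, Finset.mem_insert_self u I⟩
    · intro I1 hI1 I2 hI2 heq
      simp only [Finset.mem_filter, Finset.mem_powersetCard] at hI1 hI2
      have h1' : u ∉ I1 := fun h => (Finset.mem_erase.mp (hI1.1.1 h)).1 rfl
      have h2' : u ∉ I2 := fun h => (Finset.mem_erase.mp (hI2.1.1 h)).1 rfl
      have := congrArg (fun s => Finset.erase s u) heq
      simpa [Finset.erase_insert h1', Finset.erase_insert h2'] using this
    · intro J hJ
      simp only [Finset.mem_filter, hT, hP, Finset.mem_powersetCard] at hJ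
      obtain ⟨⟨⟨hJS, hJc⟩, hJip⟩, huJ⟩ := hJ
      refine ⟨J.erase u, ?_, ?_⟩
      · simp only [Finset.mem_filter, Finset.mem_powersetCard]
        have hsub : J.erase u ⊆ S.erase u := Finset.erase_subset_erase u hJS
        have hc : (J.erase u).card = r - 1 := by
          rw [Finset.card_erase_of_mem huJ, hJc]
        refine ⟨⟨hsub, hc⟩, ?_⟩
        have hins : insert u (J.erase u) = J := Finset.insert_erase huJ
        have huE : u ∉ J.erase u := Finset.notMem_erase u J
        have hne : (J.erase u).Nonempty := Finset.card_pos.mp (by omega)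
        have heq : ⟪x {u}, x (J.erase u)⟫ = ‖x (insert u (J.erase u))‖ ^ 2 := by
          have := h3 {u} (J.erase u) (Finset.singleton_nonempty u) hne
            (by rw [← Finset.insert_eq, hins]; omega)
          rwa [← Finset.insert_eq] at this
        rw [heq, hins]; exact hJip
      · exact Finset.insert_erase huJ
  -- double counting
  have hdouble : ∑ u ∈ S, (T.filter (fun J => u ∈ J)).card = T.card * r := by
    have hJr : ∀ J ∈ T, (S.filter (fun u => u ∈ J)).card = r := by
      intro J hJ
      have hJP : J ∈ P := Finset.mem_of_mem_filter J hJ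
      rw [hP, Finset.mem_powersetCard] at hJP
      have : S.filter (fun u => u ∈ J) = J := by
        ext v
        simp only [Finset.mem_filter]
        exact ⟨fun h => h.2, fun h => ⟨hJP.1 h, h⟩⟩
      rw [this]; exact hJP.2
    calc ∑ u ∈ S, (T.filter fun J => u ∈ J).card
        = ∑ u ∈ S, ∑ J ∈ T, if u ∈ J then 1 else 0 := by
          simp only [Finset.card_filter]
      _ = ∑ J ∈ T, ∑ u ∈ S, if u ∈ J then 1 else 0 := Finset.sum_comm
      _ = ∑ J ∈ T, (S.filter fun u => u ∈ J).card := by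
          simp only [Finset.card_filter]
      _ = ∑ _J ∈ T, r := Finset.sum_congr rfl hJr
      _ = T.card * r := by rw [Finset.sum_const, smul_eq_mul]
  -- binomial identity
  have hchoose : k * (k - 1).choose (r - 1) = m * r := by
    have := Nat.add_one_mul_choose_eq (k - 1) (r - 1)
    have hk' : k - 1 + 1 = k := by omega
    have hr' : r - 1 + 1 = r := by omega
    simp only [Nat.succ_eq_add_one, hk', hr'] at this
    rw [hm]; omega
  -- conclude via pigeonhole
  have hSne : S.Nonempty := Finset.card_pos.mp (by omega)
  apply Finset.exists_le_of_sum_le hSne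
  have hRHS : ∑ u ∈ S, ((((S.erase u).powersetCard (r-1)).filter
      (fun I => (3:ℝ)/4 ≤ ⟪x {u}, x I⟫)).card : ℝ) = ((T.card * r : ℕ) : ℝ) := by
    rw [← hdouble]
    push_cast
    exact Finset.sum_congr rfl (fun u hu => by exact_mod_cast congrArg (Nat.cast (R := ℝ)) (hbij u hu))
  rw [hRHS, Finset.sum_const, hScard, nsmul_eq_mul]
  have hchooseR : (k : ℝ) * ((k - 1).choose (r - 1) : ℝ) = (m : ℝ) * (r : ℝ) := by
    exact_mod_cast congrArg (Nat.cast (R := ℝ)) hchoose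
  push_cast
  set c : ℝ := 1 - 4 * (1 - σ / m) with hc
  calc (k : ℝ) * (((k - 1).choose (r - 1) : ℝ) * c)
      = (r : ℝ) * ((m : ℝ) * c) := by rw [← mul_assoc, hchooseR]; ring
    _ ≤ (r : ℝ) * (T.card : ℝ) := by
        apply mul_le_mul_of_nonneg_left hmarkov (by positivity)
    _ = (T.card : ℝ) * (r : ℝ) := by ring
end

section
/- Let r ≥ 2, k ≥ r, p ∈ (0,1], and ε ∈ (0,1). Then μ_p of the set of ω ∈ Ω such that some vertex v ∈ V∖S satisfies #{J ∈ C(S, r−1) : {v} ∪ J ∈ R(ω)} ≤ (1−ε)·p·C(k−1, r−1) is at most n·exp(−ε²·p·k^{r−1}/(2·(r−1)^{r−1})). Here C(S,r−1) is the set of (r−1)-element subsets of S and C(k−1,r−1) the binomial coefficient. -/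
open Finset
open scoped RealInnerProductSpace Classical
/-- Product Bernoulli(p) probability of an event `A ⊆ {0,1}^α`. -/
noncomputable def bernoulliProb {α : Type} [Fintype α] [DecidableEq α]
    (p : ℝ) (A : Set (α → Bool)) : ℝ :=
  ∑ ω : α → Bool, Set.indicator A (fun ω => ∏ a : α, if ω a then p else 1 - p) ω

/-! ### Auxiliary lemmas -/

lemma aux_pow_le_pow_mul_choose (n m : ℕ) (h : m ≤ n) : n ^ m ≤ m ^ m * n.choose m := by
  have key : n ^ m * Nat.factorial m ≤ m ^ m * n.descFactorial m := by
    have hfac : Nat.factorial m = ∏ i ∈ range m, (m - i) := by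
      rw [← Finset.prod_range_reflect, ← Finset.prod_range_add_one_eq_factorial]
      exact Finset.prod_congr rfl fun i hi => by have := Finset.mem_range.1 hi; omega
    have hn : n ^ m = ∏ _i ∈ range m, n := by simp
    have hmm : m ^ m = ∏ _i ∈ range m, m := by simp
    rw [hfac, Nat.descFactorial_eq_prod_range, hn, hmm,
      ← Finset.prod_mul_distrib, ← Finset.prod_mul_distrib]
    refine Finset.prod_le_prod' fun i hi => ?_
    have := Finset.mem_range.1 hi
    have h1 : m * i ≤ n * i := Nat.mul_le_mul_right i h
    rw [Nat.mul_sub, Nat.mul_sub, Nat.mul_comm m n]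
    omega
  rw [Nat.descFactorial_eq_factorial_mul_choose] at key
  have hf := Nat.factorial_pos m
  have : n ^ m * Nat.factorial m ≤ m ^ m * n.choose m * Nat.factorial m := by
    calc n ^ m * Nat.factorial m ≤ m ^ m * (Nat.factorial m * n.choose m) := key
      _ = m ^ m * n.choose m * Nat.factorial m := by ring
  exact Nat.le_of_mul_le_mul_right this hf

lemma aux_exp_neg_le (s : ℝ) (hs : 0 ≤ s) : Real.exp (-s) ≤ 1 - s + s ^ 2 / 2 := by
  set h : ℝ → ℝ := fun x => Real.exp x * (1 - x + x ^ 2 / 2) with hh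
  have hd : ∀ x : ℝ, HasDerivAt h (Real.exp x * (x ^ 2 / 2)) x := by
    intro x
    have hinner : HasDerivAt (fun x : ℝ => 1 - x + x ^ 2 / 2) (-1 + 2 * x ^ 1 / 2) x :=
      ((hasDerivAt_id x).const_sub 1).add ((hasDerivAt_pow 2 x).div_const 2)
    have h1 : HasDerivAt (fun y : ℝ => Real.exp y * (1 - y + y ^ 2 / 2))
        (Real.exp x * (1 - x + x ^ 2 / 2) + Real.exp x * (-1 + 2 * x ^ 1 / 2)) x :=
      (Real.hasDerivAt_exp x).mul hinner
    convert h1 using 1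
    ring
  have hmono : MonotoneOn h (Set.Ici (0:ℝ)) := by
    apply monotoneOn_of_deriv_nonneg (convex_Ici 0)
    · exact ((Real.continuous_exp.mul (by continuity)).continuousOn)
    · exact fun x _ => (hd x).differentiableAt.differentiableWithinAt
    · intro x hx
      rw [(hd x).deriv]
      positivity
  have key : 1 ≤ h s := by
    have h0 : h 0 = 1 := by simp [hh]
    rw [← h0]
    exact hmono Set.self_mem_Ici hs hs
  have hmul : Real.exp (-s) * Real.exp s = 1 := by rw [← Real.exp_add]; simp
  have key' : 1 ≤ Real.exp s * (1 - s + s ^ 2 / 2) := key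
  nlinarith [key', Real.exp_pos s, hmul]

lemma aux_per_coord (p ε : ℝ) (m : ℕ) (t : ℝ) (hp0 : 0 < p) (hp1 : p ≤ 1)
    (hε0 : 0 < ε) (ht : t ≤ (1 - ε) * p * m) :
    Real.exp (ε * t) * (1 - p + p * Real.exp (-ε)) ^ m ≤
      Real.exp (-(ε ^ 2 * p * m / 2)) := by
  have hB0 : (0:ℝ) ≤ 1 - p + p * Real.exp (-ε) :=
    by nlinarith [Real.exp_pos (-ε)]
  have hBle : 1 - p + p * Real.exp (-ε) ≤ Real.exp (-(p * (ε - ε ^ 2 / 2))) := by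
    have h1 := aux_exp_neg_le ε hε0.le
    have h2 := Real.add_one_le_exp (-(p * (ε - ε ^ 2 / 2)))
    nlinarith
  have hpow : (1 - p + p * Real.exp (-ε)) ^ m ≤
      Real.exp (-(p * (ε - ε ^ 2 / 2)) * m) := by
    calc (1 - p + p * Real.exp (-ε)) ^ m ≤ Real.exp (-(p * (ε - ε ^ 2 / 2))) ^ m :=
          pow_le_pow_left₀ hB0 hBle m
      _ = Real.exp (-(p * (ε - ε ^ 2 / 2)) * m) := by
          rw [← Real.exp_nat_mul]; ring_nf
  calc Real.exp (ε * t) * (1 - p + p * Real.exp (-ε)) ^ m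
      ≤ Real.exp (ε * t) * Real.exp (-(p * (ε - ε ^ 2 / 2)) * m) :=
        mul_le_mul_of_nonneg_left hpow (Real.exp_nonneg _)
    _ = Real.exp (ε * t + -(p * (ε - ε ^ 2 / 2)) * m) := (Real.exp_add _ _).symm
    _ ≤ Real.exp (-(ε ^ 2 * p * m / 2)) := by
        apply Real.exp_le_exp.2
        have h3 : ε * t ≤ ε * ((1 - ε) * p * m) :=
          mul_le_mul_of_nonneg_left ht hε0.le
        nlinarith

lemma aux_chernoff {α : Type} [Fintype α] [DecidableEq α] (p s t : ℝ)
    (hp0 : 0 ≤ p) (hp1 : p ≤ 1) (hs : 0 ≤ s) (F : Finset α) :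
    bernoulliProb p {ω | ((F.filter fun a => ω a = true).card : ℝ) ≤ t} ≤
      Real.exp (s * t) * (1 - p + p * Real.exp (-s)) ^ F.card := by
  classical
  set w : (α → Bool) → ℝ := fun ω => ∏ a : α, if ω a then p else 1 - p with hw
  have hwnn : ∀ ω, 0 ≤ w ω := fun ω =>
    Finset.prod_nonneg fun a _ => by split <;> linarith
  set A : Set (α → Bool) := {ω | ((F.filter fun a => ω a = true).card : ℝ) ≤ t} with hA
  set X : (α → Bool) → ℝ := fun ω => ((F.filter fun a => ω a = true).card : ℝ) with hX
  have step1 : ∀ ω, Set.indicator A w ω ≤ w ω * Real.exp (s * t - s * X ω) := by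
    intro ω
    by_cases hmem : ω ∈ A
    · rw [Set.indicator_of_mem hmem]
      have hXt : X ω ≤ t := hmem
      have : 1 ≤ Real.exp (s * t - s * X ω) := by
        rw [Real.one_le_exp_iff]; nlinarith
      nlinarith [hwnn ω]
    · rw [Set.indicator_of_notMem hmem]
      exact mul_nonneg (hwnn ω) (Real.exp_nonneg _)
  have step2 : ∀ ω, w ω * Real.exp (- s * X ω) =
      ∏ a : α, ((if ω a then p else 1 - p) *
        (if a ∈ F then (if ω a then Real.exp (-s) else 1) else 1)) := by
    intro ω
    rw [Finset.prod_mul_distrib]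
    congr 1
    have hXsum : X ω = ∑ a ∈ F, (if ω a = true then (1:ℝ) else 0) := by
      rw [hX]; simp
    rw [hXsum, Finset.mul_sum, Real.exp_sum]
    have hext : ∏ x : α, (if x ∈ F then (if ω x then Real.exp (-s) else 1) else 1)
        = ∏ a ∈ F, (if ω a then Real.exp (-s) else 1) := by
      rw [Finset.prod_ite_mem]; congr 1; exact Finset.univ_inter F
    rw [hext]
    refine Finset.prod_congr rfl fun a _ => ?_
    by_cases h : ω a <;> simp [h]
  set f : α → Bool → ℝ := fun a b => (if b then p else 1 - p) *
    (if a ∈ F then (if b then Real.exp (-s) else 1) else 1) with hf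
  have step3 : ∑ ω : α → Bool, ∏ a : α, f a (ω a) =
      ∏ a : α, ∑ b : Bool, f a b := by
    rw [Finset.prod_univ_sum (fun _ => (Finset.univ : Finset Bool)) f,
      Fintype.piFinset_univ]
  have step4 : ∏ a : α, ∑ b : Bool, f a b =
      (1 - p + p * Real.exp (-s)) ^ F.card := by
    have : ∀ a : α, ∑ b : Bool, f a b =
        (if a ∈ F then (1 - p + p * Real.exp (-s)) else 1) := by
      intro a
      rw [hf]
      by_cases h : a ∈ F <;> simp [h, Fintype.sum_bool] <;> ring
    rw [Finset.prod_congr rfl fun a _ => this a, Finset.prod_ite_mem,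
      Finset.univ_inter, Finset.prod_const]
  calc bernoulliProb p A = ∑ ω : α → Bool, Set.indicator A w ω := rfl
    _ ≤ ∑ ω : α → Bool, w ω * Real.exp (s * t - s * X ω) :=
        Finset.sum_le_sum fun ω _ => step1 ω
    _ = ∑ ω : α → Bool, Real.exp (s * t) * (w ω * Real.exp (-s * X ω)) := by
        refine Finset.sum_congr rfl fun ω _ => ?_
        rw [show s * t - s * X ω = s * t + (-s * X ω) by ring, Real.exp_add]
        ring
    _ = Real.exp (s * t) * ∑ ω : α → Bool, w ω * Real.exp (-s * X ω) := by
        rw [Finset.mul_sum]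
    _ = Real.exp (s * t) * ∑ ω : α → Bool, ∏ a : α, f a (ω a) := by
        rw [Finset.sum_congr rfl fun ω _ => step2 ω]
    _ = Real.exp (s * t) * (1 - p + p * Real.exp (-s)) ^ F.card := by
        rw [step3, step4]

lemma aux_union_bound {α ι : Type} [Fintype α] [DecidableEq α] (p : ℝ)
    (hp0 : 0 ≤ p) (hp1 : p ≤ 1) (T : Finset ι) (A : ι → Set (α → Bool))
    (E : Set (α → Bool)) (hE : ∀ ω ∈ E, ∃ v ∈ T, ω ∈ A v) :
    bernoulliProb p E ≤ ∑ v ∈ T, bernoulliProb p (A v) := by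
  classical
  set w : (α → Bool) → ℝ := fun ω => ∏ a : α, if ω a then p else 1 - p with hw
  have hwnn : ∀ ω, 0 ≤ w ω := fun ω =>
    Finset.prod_nonneg fun a _ => by split <;> linarith
  have hpt : ∀ ω, Set.indicator E w ω ≤ ∑ v ∈ T, Set.indicator (A v) w ω := by
    intro ω
    by_cases hmem : ω ∈ E
    · obtain ⟨v, hvT, hvA⟩ := hE ω hmem
      rw [Set.indicator_of_mem hmem]
      calc w ω = Set.indicator (A v) w ω := (Set.indicator_of_mem hvA w).symm
        _ ≤ ∑ v ∈ T, Set.indicator (A v) w ω :=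
            Finset.single_le_sum (fun i _ => Set.indicator_nonneg
              (fun ω' _ => hwnn ω') ω) hvT
    · rw [Set.indicator_of_notMem hmem]
      exact Finset.sum_nonneg fun i _ =>
        Set.indicator_nonneg (fun ω' _ => hwnn ω') ω
  calc bernoulliProb p E = ∑ ω : α → Bool, Set.indicator E w ω := rfl
    _ ≤ ∑ ω : α → Bool, ∑ v ∈ T, Set.indicator (A v) w ω :=
        Finset.sum_le_sum fun ω _ => hpt ω
    _ = ∑ v ∈ T, ∑ ω : α → Bool, Set.indicator (A v) w ω := Finset.sum_comm
    _ = ∑ v ∈ T, bernoulliProb p (A v) := rfl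

theorem stmt_11 (r n k : ℕ) (p ε : ℝ) (hr : 2 ≤ r) (hkr : r ≤ k)
    (hp0 : 0 < p) (hp1 : p ≤ 1) (hε0 : 0 < ε) (hε1 : ε < 1)
    (S : Finset (Fin n)) (hScard : S.card = k) :
    bernoulliProb p
      {ω : {e : Finset (Fin n) // e ∈ boundary r S} → Bool |
        ∃ v ∈ Sᶜ,
          ((((S.powersetCard (r - 1)).filter (fun J =>
              insert v J ∈ Finset.image Subtype.val
                ((boundary r S).attach.filter (fun e => ω e = true)))).card : ℝ)) ≤
            (1 - ε) * p * (((k - 1).choose (r - 1) : ℕ) : ℝ)} ≤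
      (n : ℝ) *
        Real.exp (-(ε ^ 2 * p * (k : ℝ) ^ (r - 1) / (2 * ((r : ℝ) - 1) ^ (r - 1)))) := by
  classical
  set t : ℝ := (1 - ε) * p * (((k - 1).choose (r - 1) : ℕ) : ℝ) with htdef
  set m : ℕ := k.choose (r - 1) with hmdef
  -- boundary membership for insert v J
  have hbd : ∀ v : Fin n, v ∉ S → ∀ J ∈ S.powersetCard (r - 1),
      insert v J ∈ boundary r S := by
    intro v hv J hJ
    rw [Finset.mem_powersetCard] at hJ
    obtain ⟨hJS, hJcard⟩ := hJ
    have hvJ : v ∉ J := fun h => hv (hJS h)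
    have hcard : (insert v J).card = r := by
      rw [Finset.card_insert_of_notMem hvJ, hJcard]; omega
    have hJne : J.Nonempty := by
      rw [← Finset.card_pos, hJcard]; omega
    obtain ⟨x, hx⟩ := hJne
    rw [boundary, Finset.mem_filter, Finset.mem_powersetCard]
    refine ⟨⟨Finset.subset_univ _, hcard⟩, ⟨x, ?_⟩, ⟨v, ?_⟩⟩
    · rw [Finset.mem_inter]
      exact ⟨Finset.mem_insert_of_mem hx, hJS hx⟩
    · rw [Finset.mem_sdiff]
      exact ⟨Finset.mem_insert_self v J, hv⟩
  -- the per-vertex coordinate sets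
  set coords := {e : Finset (Fin n) // e ∈ boundary r S} with hcoords
  set Fv : ∀ v : Fin n, v ∉ S → Finset coords := fun v hv =>
    (S.powersetCard (r - 1)).attach.image
      (fun J => (⟨insert v J.1, hbd v hv J.1 J.2⟩ : coords)) with hFv
  set A : Fin n → Set (coords → Bool) := fun v =>
    if hv : v ∉ S then
      {ω | (((Fv v hv).filter fun a => ω a = true).card : ℝ) ≤ t}
    else ∅ with hAdef
  -- injectivity
  have hinj : ∀ (v : Fin n) (hv : v ∉ S),
      Function.Injective (fun J : {x // x ∈ S.powersetCard (r - 1)} =>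
        (⟨insert v J.1, hbd v hv J.1 J.2⟩ : coords)) := by
    intro v hv J₁ J₂ heq
    have h1 : insert v J₁.1 = insert v J₂.1 := congrArg Subtype.val heq
    have hv1 : v ∉ J₁.1 := fun h =>
      hv ((Finset.mem_powersetCard.1 J₁.2).1 h)
    have hv2 : v ∉ J₂.1 := fun h =>
      hv ((Finset.mem_powersetCard.1 J₂.2).1 h)
    have : J₁.1 = J₂.1 := by
      have := congrArg (fun s => Finset.erase s v) h1
      simpa [Finset.erase_insert_of_ne, Finset.erase_eq_of_notMem, hv1, hv2,
        Finset.erase_insert hv1, Finset.erase_insert hv2] using this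
    exact Subtype.ext this
  have hFvcard : ∀ (v : Fin n) (hv : v ∉ S), (Fv v hv).card = m := by
    intro v hv
    rw [hFv]
    rw [Finset.card_image_of_injective _ (hinj v hv), Finset.card_attach,
      Finset.card_powersetCard, hScard]
  -- count identification
  have hcount : ∀ (v : Fin n) (hv : v ∉ S) (ω : coords → Bool),
      ((S.powersetCard (r - 1)).filter (fun J =>
          insert v J ∈ Finset.image Subtype.val
            ((boundary r S).attach.filter (fun e => ω e = true)))).card =
        ((Fv v hv).filter fun a => ω a = true).card := by
    intro v hv ω
    rw [hFv]
    rw [Finset.filter_image]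
    rw [Finset.card_image_of_injective _ (hinj v hv)]
    symm
    apply Finset.card_bij (fun (a : {x // x ∈ S.powersetCard (r - 1)}) _ => a.1)
    · intro a ha
      rw [Finset.mem_filter] at ha ⊢
      refine ⟨a.2, ?_⟩
      rw [Finset.mem_image]
      exact ⟨⟨insert v a.1, hbd v hv a.1 a.2⟩,
        Finset.mem_filter.2 ⟨Finset.mem_attach _ _, ha.2⟩, rfl⟩
    · intro a _ b _ hab
      exact Subtype.ext hab
    · intro J hJ
      rw [Finset.mem_filter] at hJ
      obtain ⟨hJp, hJP⟩ := hJ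
      rw [Finset.mem_image] at hJP
      obtain ⟨e, he, heq⟩ := hJP
      rw [Finset.mem_filter] at he
      refine ⟨⟨J, hJp⟩, Finset.mem_filter.2 ⟨Finset.mem_attach _ _, ?_⟩, rfl⟩
      have : e = ⟨insert v J, hbd v hv J hJp⟩ := Subtype.ext heq
      rw [← this]
      exact he.2
  set B : ℝ := Real.exp
    (-(ε ^ 2 * p * (k : ℝ) ^ (r - 1) / (2 * ((r : ℝ) - 1) ^ (r - 1)))) with hBdef
  -- exponent comparison
  have hexpo : Real.exp (-(ε ^ 2 * p * (m : ℝ) / 2)) ≤ B := by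
    apply Real.exp_le_exp.2
    have hrk : r - 1 ≤ k := by omega
    have hnat := aux_pow_le_pow_mul_choose k (r - 1) hrk
    have hcast : (k : ℝ) ^ (r - 1) ≤ ((r - 1 : ℕ) : ℝ) ^ (r - 1) * (m : ℝ) := by
      rw [hmdef]
      exact_mod_cast hnat
    have hr1 : ((r : ℝ) - 1) = ((r - 1 : ℕ) : ℝ) := by
      have : (1:ℕ) ≤ r := by omega
      push_cast [Nat.cast_sub this]
      ring
    have hc : (0:ℝ) < ((r - 1 : ℕ) : ℝ) ^ (r - 1) := by
      have : 1 ≤ r - 1 := by omega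
      positivity
    rw [hr1, neg_le_neg_iff, div_le_div_iff₀ (by positivity) (by positivity)]
    have h0 : (0:ℝ) ≤ ε ^ 2 * p := by positivity
    nlinarith [mul_le_mul_of_nonneg_left hcast h0]
  -- threshold comparison
  have ht' : t ≤ (1 - ε) * p * (m : ℝ) := by
    rw [htdef, hmdef]
    have : (k - 1).choose (r - 1) ≤ k.choose (r - 1) :=
      Nat.choose_le_choose (r - 1) (by omega)
    have h1 : (((k - 1).choose (r - 1) : ℕ) : ℝ) ≤ ((k.choose (r - 1) : ℕ) : ℝ) :=
      by exact_mod_cast this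
    have h2 : (0:ℝ) ≤ (1 - ε) * p := by nlinarith
    nlinarith
  -- per-vertex bound
  have hvbound : ∀ v ∈ Sᶜ, bernoulliProb p (A v) ≤ B := by
    intro v hvc
    have hv : v ∉ S := Finset.mem_compl.1 hvc
    have hAv : A v = {ω : coords → Bool |
        (((Fv v hv).filter fun a => ω a = true).card : ℝ) ≤ t} := by
      rw [hAdef]; simp [hv]
    rw [hAv]
    calc bernoulliProb p {ω : coords → Bool |
          (((Fv v hv).filter fun a => ω a = true).card : ℝ) ≤ t}
        ≤ Real.exp (ε * t) * (1 - p + p * Real.exp (-ε)) ^ (Fv v hv).card :=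
          aux_chernoff p ε t hp0.le hp1 hε0.le (Fv v hv)
      _ = Real.exp (ε * t) * (1 - p + p * Real.exp (-ε)) ^ m := by
          rw [hFvcard v hv]
      _ ≤ Real.exp (-(ε ^ 2 * p * (m : ℝ) / 2)) :=
          aux_per_coord p ε m t hp0 hp1 hε0 ht'
      _ ≤ B := hexpo
  -- union bound
  have hunion := aux_union_bound p hp0.le hp1 Sᶜ A
    {ω : coords → Bool |
        ∃ v ∈ Sᶜ,
          ((((S.powersetCard (r - 1)).filter (fun J =>
              insert v J ∈ Finset.image Subtype.val
                ((boundary r S).attach.filter (fun e => ω e = true)))).card : ℝ)) ≤ t}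
    (by
      intro ω hω
      obtain ⟨v, hvc, hle⟩ := hω
      have hv : v ∉ S := Finset.mem_compl.1 hvc
      refine ⟨v, hvc, ?_⟩
      have hAv : A v = {ω : coords → Bool |
          (((Fv v hv).filter fun a => ω a = true).card : ℝ) ≤ t} := by
        rw [hAdef]; simp [hv]
      rw [hAv]
      show (((Fv v hv).filter fun a => ω a = true).card : ℝ) ≤ t
      rw [← hcount v hv ω]
      exact hle)
  calc bernoulliProb p _ ≤ ∑ v ∈ Sᶜ, bernoulliProb p (A v) := hunion
    _ ≤ ∑ _v ∈ Sᶜ, B := Finset.sum_le_sum hvbound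
    _ = (Sᶜ.card : ℝ) * B := by rw [Finset.sum_const, nsmul_eq_mul]
    _ ≤ (n : ℝ) * B := by
        have h1 : Sᶜ.card ≤ n := by
          have := Finset.card_le_univ (Sᶜ : Finset (Fin n))
          simpa using this
        have hB0 : 0 ≤ B := Real.exp_nonneg _
        have : (Sᶜ.card : ℝ) ≤ (n : ℝ) := by exact_mod_cast h1
        nlinarith
end

section
/- Let A and B be disjoint finite nonempty sets, let p ∈ (0,1], and let ν_p be the product probability measure on {0,1}^{A×B} under which the coordinates are independent Bernoulli(p) random variables. For ω ∈ {0,1}^{A×B} and (a,b) ∈ A×B set X_{ab}(ω) := p − ω_{(a,b)}. Then for every δ ∈ (0,1], ν_p of the set of ω for which there exists a sign assignment y : A ∪ B → {−1, +1} with |Σ_{(a,b) ∈ A×B} y(a)·y(b)·X_{ab}(ω)| > δ·p·|A|·|B| is at most 2^{1+2(|A|+|B|)}·exp(−3·δ²·p·|A|·|B|/8). -/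
open Finset
open scoped RealInnerProductSpace Classical
lemma exp_scalar {δ : ℝ} (hδ0 : 0 < δ) (hδ1 : δ ≤ 1) :
    Real.exp (3*δ/4) ≤ 1 + 3*δ/4 + 3*δ^2/8 := by
  set x := 3*δ/4 with hx
  have hx0 : 0 < x := by positivity
  have hx1 : x ≤ 3/4 := by rw [hx]; linarith
  have h := Real.exp_bound (x := x) (by rw [abs_of_pos hx0]; linarith) (n := 4) (by norm_num)
  rw [abs_of_pos hx0] at h
  have hsum : ∑ m ∈ range 4, x ^ m / (m.factorial : ℝ)
      = 1 + x + x^2/2 + x^3/6 := by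
    simp [Finset.sum_range_succ, Nat.factorial]
  rw [hsum] at h
  have h2 : Real.exp x ≤ 1 + x + x^2/2 + x^3/6 + x^4 * (5/96) := by
    have h' := abs_le.1 h
    norm_num [Nat.factorial] at h' ⊢
    linarith [h'.2]
  have h3 : x^3 ≤ (3/4)*x^2 := by nlinarith
  have h4 : x^4 ≤ (9/16)*x^2 := by nlinarith
  have : x^3/6 + x^4*(5/96) ≤ x^2/6 := by nlinarith
  have hxx : 3*δ^2/8 = 2*x^2/3 := by rw [hx]; ring
  rw [hxx]
  linarith

lemma coord_bound {p lam s : ℝ} (hp0 : 0 < p) (hp1 : p ≤ 1) (hlam : 0 < lam)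
    (hs : s = 1 ∨ s = -1) :
    p * Real.exp (lam * (s * (p - 1))) + (1 - p) * Real.exp (lam * (s * p)) ≤
      Real.exp (p * (Real.exp lam - 1 - lam)) := by
  have hexp : ∀ u : ℝ, 1 + u ≤ Real.exp u := fun u => by
    linarith [Real.add_one_le_exp u]
  rcases hs with rfl | rfl
  · -- s = 1 : LHS = exp(lam*p) * (1 + p*(exp(-lam)-1))
    have key : p * Real.exp (lam*(1*(p-1))) + (1-p)*Real.exp (lam*(1*p))
        = Real.exp (lam*p) * (1 + p*(Real.exp (-lam) - 1)) := by
      have : lam*(1*(p-1)) = lam*p + (-lam) := by ring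
      rw [this, Real.exp_add]; ring
    rw [key]
    have h1 : 1 + p*(Real.exp (-lam) - 1) ≤ Real.exp (p*(Real.exp (-lam) - 1)) := by
      have := hexp (p*(Real.exp (-lam) - 1)); linarith
    calc Real.exp (lam*p) * (1 + p*(Real.exp (-lam) - 1))
        ≤ Real.exp (lam*p) * Real.exp (p*(Real.exp (-lam) - 1)) := by
          apply mul_le_mul_of_nonneg_left h1 (Real.exp_pos _).le
      _ = Real.exp (lam*p + p*(Real.exp (-lam) - 1)) := (Real.exp_add _ _).symm
      _ ≤ Real.exp (p * (Real.exp lam - 1 - lam)) := by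
          apply Real.exp_le_exp.2
          have hsinh : lam < Real.sinh lam := Real.self_lt_sinh_iff.2 hlam
          rw [Real.sinh_eq] at hsinh
          nlinarith
  · -- s = -1
    have key : p * Real.exp (lam*((-1)*(p-1))) + (1-p)*Real.exp (lam*((-1)*p))
        = Real.exp (-(lam*p)) * (1 + p*(Real.exp lam - 1)) := by
      have : lam*((-1)*(p-1)) = -(lam*p) + lam := by ring
      rw [this, Real.exp_add]; ring
    rw [key]
    have h1 : 1 + p*(Real.exp lam - 1) ≤ Real.exp (p*(Real.exp lam - 1)) := by
      have := hexp (p*(Real.exp lam - 1)); linarith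
    calc Real.exp (-(lam*p)) * (1 + p*(Real.exp lam - 1))
        ≤ Real.exp (-(lam*p)) * Real.exp (p*(Real.exp lam - 1)) := by
          apply mul_le_mul_of_nonneg_left h1 (Real.exp_pos _).le
      _ = Real.exp (-(lam*p) + p*(Real.exp lam - 1)) := (Real.exp_add _ _).symm
      _ ≤ Real.exp (p * (Real.exp lam - 1 - lam)) := by
          apply le_of_eq; ring

lemma sum_prod_bool {ι : Type*} [Fintype ι] [DecidableEq ι] (f : ι → Bool → ℝ) :
    ∑ ω : ι → Bool, ∏ i, f i (ω i) = ∏ i, (f i true + f i false) := by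
  have := (Finset.prod_univ_sum (fun _ : ι => (univ : Finset Bool)) f).symm
  rw [Fintype.piFinset_univ] at this
  rw [this]
  congr 1; ext i; simp [Fintype.sum_bool]

lemma mgf_bound {ι : Type} [Fintype ι] [DecidableEq ι] {p lam : ℝ}
    (hp0 : 0 < p) (hp1 : p ≤ 1) (hlam : 0 < lam) (s : ι → ℝ)
    (hs : ∀ i, s i = 1 ∨ s i = -1) :
    ∑ ω : ι → Bool, (∏ i, if ω i then p else 1 - p) *
        Real.exp (lam * ∑ i, s i * (p - if ω i then 1 else 0)) ≤
      Real.exp ((Fintype.card ι : ℝ) * (p * (Real.exp lam - 1 - lam))) := by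
  have hfac : ∀ ω : ι → Bool,
      (∏ i, if ω i then p else 1 - p) *
        Real.exp (lam * ∑ i, s i * (p - if ω i then 1 else 0))
      = ∏ i, ((if ω i then p else 1 - p) *
          Real.exp (lam * (s i * (p - if ω i then 1 else 0)))) := by
    intro ω
    rw [Finset.mul_sum, Real.exp_sum, Finset.prod_mul_distrib]
  calc ∑ ω : ι → Bool, (∏ i, if ω i then p else 1 - p) *
        Real.exp (lam * ∑ i, s i * (p - if ω i then 1 else 0))
      = ∑ ω : ι → Bool, ∏ i, ((if ω i then p else 1 - p) *
          Real.exp (lam * (s i * (p - if ω i then 1 else 0)))) := by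
        exact Finset.sum_congr rfl (fun ω _ => hfac ω)
    _ = ∏ i, (p * Real.exp (lam * (s i * (p - 1))) +
          (1 - p) * Real.exp (lam * (s i * (p - 0)))) := by
        rw [sum_prod_bool (fun i b => (if b then p else 1 - p) *
          Real.exp (lam * (s i * (p - if b then 1 else 0))))]
        norm_num
    _ ≤ ∏ i : ι, Real.exp (p * (Real.exp lam - 1 - lam)) := by
        apply Finset.prod_le_prod
        · intro i _
          have h1 : (0:ℝ) ≤ 1 - p := by linarith
          positivity
        · intro i _
          have := coord_bound hp0 hp1 hlam (hs i)
          simpa using this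
    _ = Real.exp ((Fintype.card ι : ℝ) * (p * (Real.exp lam - 1 - lam))) := by
        rw [Finset.prod_const, ← Real.exp_nat_mul, Finset.card_univ]

lemma tail_bound {ι : Type} [Fintype ι] [DecidableEq ι] {p lam : ℝ}
    (hp0 : 0 < p) (hp1 : p ≤ 1) (hlam : 0 < lam) (s : ι → ℝ)
    (hs : ∀ i, s i = 1 ∨ s i = -1) (t : ℝ) :
    ∑ ω : ι → Bool, (if t < ∑ i, s i * (p - if ω i then 1 else 0)
        then (∏ i, if ω i then p else 1 - p) else 0) ≤
      Real.exp (-(lam * t) + (Fintype.card ι : ℝ) * (p * (Real.exp lam - 1 - lam))) := by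
  have hw : ∀ ω : ι → Bool, (0:ℝ) ≤ ∏ i, if ω i then p else 1 - p := by
    intro ω
    apply Finset.prod_nonneg
    intro i _
    by_cases h : ω i <;> simp [h] <;> linarith
  have hpt : ∀ ω : ι → Bool,
      (if t < ∑ i, s i * (p - if ω i then 1 else 0)
        then (∏ i, if ω i then p else 1 - p) else 0) ≤
      Real.exp (-(lam * t)) * ((∏ i, if ω i then p else 1 - p) *
        Real.exp (lam * ∑ i, s i * (p - if ω i then 1 else 0))) := by
    intro ω
    set S := ∑ i, s i * (p - if ω i then 1 else 0) with hS
    set w := ∏ i, if ω i then p else 1 - p with hw'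
    by_cases h : t < S
    · rw [if_pos h]
      have h1 : (1:ℝ) ≤ Real.exp (-(lam*t)) * Real.exp (lam * S) := by
        rw [← Real.exp_add]
        have : 0 ≤ -(lam*t) + lam*S := by nlinarith
        calc (1:ℝ) = Real.exp 0 := Real.exp_zero.symm
          _ ≤ _ := Real.exp_le_exp.2 this
      calc w = w * 1 := (mul_one w).symm
        _ ≤ w * (Real.exp (-(lam*t)) * Real.exp (lam * S)) :=
            mul_le_mul_of_nonneg_left h1 (hw ω)
        _ = Real.exp (-(lam*t)) * (w * Real.exp (lam*S)) := by ring
    · rw [if_neg h]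
      exact mul_nonneg (Real.exp_pos _).le (mul_nonneg (hw ω) (Real.exp_pos _).le)
  calc ∑ ω : ι → Bool, (if t < ∑ i, s i * (p - if ω i then 1 else 0)
        then (∏ i, if ω i then p else 1 - p) else 0)
      ≤ ∑ ω : ι → Bool, Real.exp (-(lam * t)) * ((∏ i, if ω i then p else 1 - p) *
          Real.exp (lam * ∑ i, s i * (p - if ω i then 1 else 0))) :=
        Finset.sum_le_sum (fun ω _ => hpt ω)
    _ = Real.exp (-(lam * t)) * ∑ ω : ι → Bool, ((∏ i, if ω i then p else 1 - p) *
          Real.exp (lam * ∑ i, s i * (p - if ω i then 1 else 0))) := by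
        rw [Finset.mul_sum]
    _ ≤ Real.exp (-(lam * t)) *
          Real.exp ((Fintype.card ι : ℝ) * (p * (Real.exp lam - 1 - lam))) := by
        apply mul_le_mul_of_nonneg_left (mgf_bound hp0 hp1 hlam s hs) (Real.exp_pos _).le
    _ = _ := (Real.exp_add _ _).symm

lemma tail_final {ι : Type} [Fintype ι] [DecidableEq ι] {p δ : ℝ}
    (hp0 : 0 < p) (hp1 : p ≤ 1) (hδ0 : 0 < δ) (hδ1 : δ ≤ 1) (s : ι → ℝ)
    (hs : ∀ i, s i = 1 ∨ s i = -1) :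
    ∑ ω : ι → Bool, (if δ * p * (Fintype.card ι : ℝ) <
        ∑ i, s i * (p - if ω i then 1 else 0)
        then (∏ i, if ω i then p else 1 - p) else 0) ≤
      Real.exp (-(3 * δ^2 * p * (Fintype.card ι : ℝ) / 8)) := by
  have hlam : 0 < 3*δ/4 := by linarith
  refine (tail_bound hp0 hp1 hlam s hs _).trans ?_
  apply Real.exp_le_exp.2
  have hN : (0:ℝ) ≤ (Fintype.card ι : ℝ) := Nat.cast_nonneg _
  have hexp := exp_scalar hδ0 hδ1
  nlinarith [mul_nonneg (mul_nonneg hp0.le hN) (sub_nonneg.2 hexp)]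

open scoped Classical in
noncomputable def signOf {α : Type} [DecidableEq α] (A B : Finset α)
    (σ : {a // a ∈ A ∪ B} → Bool) (a : α) : ℝ :=
  if h : a ∈ A ∪ B then (if σ ⟨a, h⟩ then 1 else -1) else 1

open scoped Classical in
theorem stmt_12' {α : Type} [DecidableEq α] (A B : Finset α)
    (hA : A.Nonempty) (hB : B.Nonempty) (hAB : Disjoint A B)
    (p : ℝ) (hp0 : 0 < p) (hp1 : p ≤ 1) (δ : ℝ) (hδ0 : 0 < δ) (hδ1 : δ ≤ 1) :
    (∑ ω : {e : α × α // e ∈ A ×ˢ B} → Bool, Set.indicator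
      {ω : {e : α × α // e ∈ A ×ˢ B} → Bool |
        ∃ y : α → ℝ, (∀ a ∈ A ∪ B, y a = 1 ∨ y a = -1) ∧
          δ * p * (A.card : ℝ) * (B.card : ℝ) <
            |∑ e : {e : α × α // e ∈ A ×ˢ B},
              y e.1.1 * y e.1.2 * (p - if ω e then 1 else 0)|}
      (fun ω => ∏ e : {e : α × α // e ∈ A ×ˢ B}, if ω e then p else 1 - p) ω) ≤
      2 ^ (1 + 2 * (A.card + B.card)) *
        Real.exp (-(3 * δ ^ 2 * p * (A.card : ℝ) * (B.card : ℝ) / 8)) := by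
  set ι := {e : α × α // e ∈ A ×ˢ B}
  set τ := ({a // a ∈ A ∪ B} → Bool)
  have hcard : (Fintype.card ι : ℝ) = (A.card : ℝ) * B.card := by
    rw [Fintype.card_coe, Finset.card_product]; push_cast; ring
  set t : ℝ := δ * p * A.card * B.card with ht
  set sg : τ → ι → ℝ := fun σ e => signOf A B σ e.1.1 * signOf A B σ e.1.2 with hsg
  have hmem : ∀ e : ι, e.1.1 ∈ A ∧ e.1.2 ∈ B := fun e => Finset.mem_product.1 e.2
  have hY : ∀ σ : τ, ∀ a ∈ A ∪ B, signOf A B σ a = 1 ∨ signOf A B σ a = -1 := by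
    intro σ a ha
    unfold signOf
    rw [dif_pos ha]
    by_cases h : σ ⟨a, ha⟩ <;> simp [h]
  have hsσ : ∀ σ : τ, ∀ e : ι, sg σ e = 1 ∨ sg σ e = -1 := by
    intro σ e
    rcases hY σ e.1.1 (Finset.mem_union_left _ (hmem e).1) with h1 | h1 <;>
      rcases hY σ e.1.2 (Finset.mem_union_right _ (hmem e).2) with h2 | h2 <;>
      simp [hsg, h1, h2]
  have hnsσ : ∀ σ : τ, ∀ e : ι, -(sg σ e) = 1 ∨ -(sg σ e) = -1 := by
    intro σ e; rcases hsσ σ e with h | h <;> rw [h] <;> norm_num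
  have hw : ∀ ω : ι → Bool, (0:ℝ) ≤ ∏ i, if ω i then p else 1 - p := by
    intro ω; apply Finset.prod_nonneg; intro i _
    by_cases h : ω i <;> simp [h] <;> linarith
  have hind : ∀ (ω : ι → Bool) (c : Prop) (_ : Decidable c),
      (0:ℝ) ≤ (if c then ∏ i, (if ω i then p else 1 - p) else 0) := by
    intro ω c hc
    split_ifs
    · exact hw ω
    · exact le_rfl
  -- pointwise union bound
  have hpoint : ∀ ω : ι → Bool,
      Set.indicator
        {ω : ι → Bool | ∃ y : α → ℝ, (∀ a ∈ A ∪ B, y a = 1 ∨ y a = -1) ∧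
          t < |∑ e : ι, y e.1.1 * y e.1.2 * (p - if ω e then 1 else 0)|}
        (fun ω => ∏ e : ι, if ω e then p else 1 - p) ω ≤
      ∑ σ : τ,
        ((if t < ∑ i, sg σ i * (p - if ω i then 1 else 0)
            then ∏ i, (if ω i then p else 1 - p) else 0) +
         (if t < ∑ i, (-(sg σ i)) * (p - if ω i then 1 else 0)
            then ∏ i, (if ω i then p else 1 - p) else 0)) := by
    intro ω
    rw [Set.indicator_apply]
    split_ifs with hE
    · obtain ⟨y, hy, hgt⟩ := hE
      set σ0 : τ := fun a => if y ↑a = 1 then true else false with hσ0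
      have hyY : ∀ a ∈ A ∪ B, signOf A B σ0 a = y a := by
        intro a ha
        unfold signOf
        rw [dif_pos ha]
        rcases hy a ha with h | h
        · simp [hσ0, h]
        · have hne : y a ≠ 1 := by rw [h]; norm_num
          simp [hσ0, h, hne]
          exact fun h' => absurd h' (by norm_num)
      have hSeq : ∑ e : ι, sg σ0 e * (p - if ω e then 1 else 0)
          = ∑ e : ι, y e.1.1 * y e.1.2 * (p - if ω e then 1 else 0) := by
        apply Finset.sum_congr rfl
        intro e _
        simp only [hsg]
        rw [hyY _ (Finset.mem_union_left _ (hmem e).1),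
          hyY _ (Finset.mem_union_right _ (hmem e).2)]
      have hle : (∏ i, if ω i then p else 1 - p) ≤
          ((if t < ∑ i, sg σ0 i * (p - if ω i then 1 else 0)
              then ∏ i, (if ω i then p else 1 - p) else 0) +
           (if t < ∑ i, (-(sg σ0 i)) * (p - if ω i then 1 else 0)
              then ∏ i, (if ω i then p else 1 - p) else 0)) := by
        rcases lt_abs.1 hgt with hpos | hneg
        · rw [if_pos (by rw [hSeq]; exact hpos)]
          have := hind ω (t < ∑ i, (-(sg σ0 i)) * (p - if ω i then 1 else 0))
            inferInstance
          linarith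
        · have hneg' : t < ∑ i, (-(sg σ0 i)) * (p - if ω i then 1 else 0) := by
            have : ∑ i, (-(sg σ0 i)) * (p - if ω i then 1 else 0)
                = -∑ i, sg σ0 i * (p - if ω i then 1 else 0) := by
              rw [← Finset.sum_neg_distrib]
              exact Finset.sum_congr rfl (fun i _ => by ring)
            rw [this, hSeq]
            exact hneg
          rw [if_pos hneg']
          have := hind ω (t < ∑ i, sg σ0 i * (p - if ω i then 1 else 0)) inferInstance
          linarith
      refine hle.trans ?_
      refine Finset.single_le_sum (f := fun σ : τ =>
        ((if t < ∑ i, sg σ i * (p - if ω i then 1 else 0)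
            then ∏ i, (if ω i then p else 1 - p) else 0) +
         (if t < ∑ i, (-(sg σ i)) * (p - if ω i then 1 else 0)
            then ∏ i, (if ω i then p else 1 - p) else 0))) ?_ (Finset.mem_univ σ0)
      intro σ _
      exact add_nonneg (hind ω _ inferInstance) (hind ω _ inferInstance)
    · apply Finset.sum_nonneg
      intro σ _
      exact add_nonneg (hind ω _ inferInstance) (hind ω _ inferInstance)
  -- put everything together
  have hteq : t = δ * p * (Fintype.card ι : ℝ) := by rw [ht, hcard]; ring
  have htail : ∀ σ : τ,
      (∑ ω : ι → Bool, (if t < ∑ i, sg σ i * (p - if ω i then 1 else 0)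
          then ∏ i, (if ω i then p else 1 - p) else 0)) +
      (∑ ω : ι → Bool, (if t < ∑ i, (-(sg σ i)) * (p - if ω i then 1 else 0)
          then ∏ i, (if ω i then p else 1 - p) else 0)) ≤
      2 * Real.exp (-(3 * δ ^ 2 * p * (Fintype.card ι : ℝ) / 8)) := by
    intro σ
    have h1 := tail_final hp0 hp1 hδ0 hδ1 (sg σ) (hsσ σ)
    have h2 := tail_final hp0 hp1 hδ0 hδ1 (fun i => -(sg σ i)) (hnsσ σ)
    rw [← hteq] at h1 h2
    linarith
  calc (∑ ω : ι → Bool, Set.indicator _ (fun ω => ∏ e : ι, if ω e then p else 1 - p) ω)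
      ≤ ∑ ω : ι → Bool, ∑ σ : τ,
        ((if t < ∑ i, sg σ i * (p - if ω i then 1 else 0)
            then ∏ i, (if ω i then p else 1 - p) else 0) +
         (if t < ∑ i, (-(sg σ i)) * (p - if ω i then 1 else 0)
            then ∏ i, (if ω i then p else 1 - p) else 0)) :=
        Finset.sum_le_sum (fun ω _ => hpoint ω)
    _ = ∑ σ : τ, ((∑ ω : ι → Bool, (if t < ∑ i, sg σ i * (p - if ω i then 1 else 0)
            then ∏ i, (if ω i then p else 1 - p) else 0)) +
         (∑ ω : ι → Bool, (if t < ∑ i, (-(sg σ i)) * (p - if ω i then 1 else 0)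
            then ∏ i, (if ω i then p else 1 - p) else 0))) := by
        rw [Finset.sum_comm]
        exact Finset.sum_congr rfl (fun σ _ => Finset.sum_add_distrib)
    _ ≤ ∑ σ : τ, 2 * Real.exp (-(3 * δ ^ 2 * p * (Fintype.card ι : ℝ) / 8)) :=
        Finset.sum_le_sum (fun σ _ => htail σ)
    _ = (Fintype.card τ : ℝ) * (2 * Real.exp (-(3 * δ ^ 2 * p * (Fintype.card ι : ℝ) / 8))) := by
        rw [Finset.sum_const, Finset.card_univ, nsmul_eq_mul]
    _ ≤ 2 ^ (1 + 2 * (A.card + B.card)) *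
        Real.exp (-(3 * δ ^ 2 * p * (A.card : ℝ) * (B.card : ℝ) / 8)) := by
        have hcardτ : (Fintype.card τ : ℝ) = 2 ^ (A.card + B.card) := by
          rw [show Fintype.card τ = 2 ^ Fintype.card {a // a ∈ A ∪ B} from by
            simp [τ, Fintype.card_fun]]
          rw [Fintype.card_coe, Finset.card_union_of_disjoint hAB]
          norm_cast
        have hexpeq : Real.exp (-(3 * δ ^ 2 * p * (Fintype.card ι : ℝ) / 8))
            = Real.exp (-(3 * δ ^ 2 * p * (A.card : ℝ) * (B.card : ℝ) / 8)) := by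
          rw [hcard]; ring_nf
        rw [hcardτ, hexpeq]
        have hpow : (2:ℝ) ^ (A.card + B.card) * 2 ≤ 2 ^ (1 + 2 * (A.card + B.card)) := by
          have h1 : (1:ℝ) ≤ 2 ^ (A.card + B.card) := one_le_pow₀ (by norm_num : (1:ℝ) ≤ 2)
          have e1 : (2:ℝ) ^ (1 + 2 * (A.card + B.card))
              = 2 * (2 ^ (A.card + B.card) * 2 ^ (A.card + B.card)) := by
            rw [two_mul, pow_add, pow_add, pow_one]
          rw [e1]
          nlinarith [h1, mul_le_mul_of_nonneg_left h1 (le_trans zero_le_one h1)]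
        calc (2:ℝ) ^ (A.card + B.card) * (2 * Real.exp _)
            = ((2:ℝ) ^ (A.card + B.card) * 2) * Real.exp _ := by ring
          _ ≤ _ := mul_le_mul_of_nonneg_right hpow (Real.exp_pos _).le

theorem stmt_12 {α : Type} [DecidableEq α] (A B : Finset α)
    (hA : A.Nonempty) (hB : B.Nonempty) (hAB : Disjoint A B)
    (p : ℝ) (hp0 : 0 < p) (hp1 : p ≤ 1) (δ : ℝ) (hδ0 : 0 < δ) (hδ1 : δ ≤ 1) :
    bernoulliProb p
      {ω : {e : α × α // e ∈ A ×ˢ B} → Bool |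
        ∃ y : α → ℝ, (∀ a ∈ A ∪ B, y a = 1 ∨ y a = -1) ∧
          δ * p * (A.card : ℝ) * (B.card : ℝ) <
            |∑ e : {e : α × α // e ∈ A ×ˢ B},
              y e.1.1 * y e.1.2 * (p - if ω e then 1 else 0)|} ≤
      2 ^ (1 + 2 * (A.card + B.card)) *
        Real.exp (-(3 * δ ^ 2 * p * (A.card : ℝ) * (B.card : ℝ) / 8)) := by
  have := stmt_12' A B hA hB hAB p hp0 hp1 δ hδ0 hδ1
  unfold bernoulliProb
  exact this
end

section
/- Let x be a feasible SDP solution for H = (V,E) and let S ⊆ V with |S| = k ≥ r. Then Σ_{u ∈ S} Σ_{I ∈ C(S∖{u}, r−1)} ⟨x_u, x_I⟩ ≤ (C(k−2, r−2)/(r−1)) · Σ_{u ∈ S} Σ_{v ∈ S∖{u}} ⟨x_u, x_v⟩, where C(T,i) denotes the set of i-element subsets of T and C(k−2,r−2) the binomial coefficient. -/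
open Finset
open scoped RealInnerProductSpace Classical

lemma count_powersetCard {V : Type} [DecidableEq V] (T : Finset V) (m : ℕ) (v : V) (hv : v ∈ T) :
    ((T.powersetCard (m+1)).filter (fun I => v ∈ I)).card = (T.card - 1).choose m := by
  have : ((T.powersetCard (m+1)).filter (fun I => v ∈ I)).card
      = ((T.erase v).powersetCard m).card := by
    apply Finset.card_bij (fun I _ => I.erase v)
    · intro I hI
      simp only [mem_filter, mem_powersetCard] at hI
      simp only [mem_powersetCard]
      exact ⟨erase_subset_erase v hI.1.1, by rw [card_erase_of_mem hI.2, hI.1.2]; rfl⟩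
    · intro I hI J hJ h
      simp only [mem_filter] at hI hJ
      rw [← insert_erase hI.2, ← insert_erase hJ.2, h]
    · intro J hJ
      simp only [mem_powersetCard] at hJ
      refine ⟨insert v J, ?_, ?_⟩
      · simp only [mem_filter, mem_powersetCard, mem_insert, true_or, and_true]
        constructor
        · exact insert_subset hv (hJ.1.trans (erase_subset v T))
        · rw [card_insert_of_notMem (fun h => (mem_erase.mp (hJ.1 h)).1 rfl), hJ.2]
      · rw [erase_insert (fun h => (mem_erase.mp (hJ.1 h)).1 rfl)]
  rw [this, card_powersetCard, card_erase_of_mem hv]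

lemma sum_powersetCard_sum {V : Type} [DecidableEq V] (T : Finset V) (m : ℕ) (f : V → ℝ) :
    ∑ I ∈ T.powersetCard (m+1), ∑ v ∈ I, f v
      = ((T.card - 1).choose m : ℝ) * ∑ v ∈ T, f v := by
  have h1 : ∀ I ∈ T.powersetCard (m+1), ∑ v ∈ I, f v
      = ∑ v ∈ T, if v ∈ I then f v else 0 := by
    intro I hI
    rw [sum_ite_mem, inter_eq_right.mpr (mem_powersetCard.mp hI).1]
  rw [Finset.sum_congr rfl h1, Finset.sum_comm]
  rw [Finset.mul_sum]
  refine Finset.sum_congr rfl fun v hv => ?_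
  rw [Finset.sum_ite, Finset.sum_const, Finset.sum_const_zero, add_zero,
    count_powersetCard T m v hv, nsmul_eq_mul]


theorem stmt_14 {V : Type} [Fintype V] [DecidableEq V]
    {H : Type} [NormedAddCommGroup H] [InnerProductSpace ℝ H]
    (r k : ℕ) (hr : 2 ≤ r)
    (E : Finset (Finset V)) (hE : ∀ e ∈ E, e.card = r)
    (x : Finset V → H) (hx : SDPFeasible r E x)
    (S : Finset V) (hScard : S.card = k) (hkr : r ≤ k) :
    ∑ u ∈ S, ∑ I ∈ (S.erase u).powersetCard (r - 1), ⟪x {u}, x I⟫ ≤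
      ((((k - 2).choose (r - 2) : ℕ) : ℝ) / ((r : ℝ) - 1)) *
        ∑ u ∈ S, ∑ v ∈ S.erase u, ⟪x {u}, x {v}⟫ := by
  obtain ⟨h1, h2, h3, h4, h5⟩ := hx
  have hpos : (0:ℝ) < (r:ℝ) - 1 := by
    have : (2:ℝ) ≤ (r:ℝ) := by exact_mod_cast hr
    linarith
  have hk2 : 2 ≤ k := le_trans hr hkr
  have step : ∀ u ∈ S, ((r:ℝ) - 1) * ∑ I ∈ (S.erase u).powersetCard (r-1), ⟪x {u}, x I⟫
      ≤ (((k-2).choose (r-2) : ℕ) : ℝ) * ∑ v ∈ S.erase u, ⟪x {u}, x {v}⟫ := by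
    intro u hu
    have hcard : (S.erase u).card - 1 = k - 2 := by
      rw [card_erase_of_mem hu, hScard]; omega
    have hsum := sum_powersetCard_sum (S.erase u) (r-2) (fun v => ⟪x {u}, x {v}⟫)
    rw [hcard] at hsum
    have hm : r - 2 + 1 = r - 1 := by omega
    rw [hm] at hsum
    rw [← hsum, mul_sum]
    apply Finset.sum_le_sum
    intro I hI
    obtain ⟨hIsub, hIcard⟩ := mem_powersetCard.mp hI
    have hterm : ∀ v ∈ I, ⟪x {u}, x I⟫ ≤ ⟪x {u}, x {v}⟫ := by
      intro v hv
      exact h4 u {v} I (singleton_nonempty v) (singleton_subset_iff.mpr hv)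
        (by rw [hIcard]; omega)
    calc ((r:ℝ) - 1) * ⟪x {u}, x I⟫ = ∑ _v ∈ I, ⟪x {u}, x I⟫ := by
            rw [Finset.sum_const, hIcard, nsmul_eq_mul]
            congr 1
            have h1r : 1 ≤ r := by omega
            push_cast [Nat.cast_sub h1r]
            ring
      _ ≤ ∑ v ∈ I, ⟪x {u}, x {v}⟫ := Finset.sum_le_sum hterm
  have total : ((r:ℝ) - 1) * ∑ u ∈ S, ∑ I ∈ (S.erase u).powersetCard (r-1), ⟪x {u}, x I⟫
      ≤ (((k-2).choose (r-2) : ℕ) : ℝ) * ∑ u ∈ S, ∑ v ∈ S.erase u, ⟪x {u}, x {v}⟫ := by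
    rw [mul_sum, mul_sum]
    exact Finset.sum_le_sum step
  rw [div_mul_eq_mul_div, le_div_iff₀ hpos]
  linarith [total]
end

section
/- Let S ⊆ V be an independent set of H = (V,E), let 𝓗 be a real inner product space, let x be a feasible SDP solution for H in 𝓗, and let ê ∈ 𝓗 be a unit vector with ⟨ê, x_I⟩ = 0 for every nonempty I ⊆ V∖S with |I| ≤ r+1. Define, for each nonempty I ⊆ V with |I| ≤ r+1: x'_I := ê if I ⊆ S; x'_I := x_I if I ⊆ V∖S; and x'_I := 0 otherwise. Then x' is a feasible SDP solution for H in 𝓗. -/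
open Finset
open scoped RealInnerProductSpace Classical
theorem stmt_15 {V : Type} [Fintype V] [DecidableEq V]
    {H : Type} [NormedAddCommGroup H] [InnerProductSpace ℝ H]
    (r : ℕ) (hr : 2 ≤ r)
    (E : Finset (Finset V)) (hE : ∀ e ∈ E, e.card = r)
    (S : Finset V) (hSind : ∀ e ∈ E, ¬ e ⊆ S)
    (x : Finset V → H) (hx : SDPFeasible r E x)
    (ehat : H) (hehat : ‖ehat‖ = 1)
    (horth : ∀ I : Finset V, I.Nonempty → I ⊆ Sᶜ → I.card ≤ r + 1 →
      ⟪ehat, x I⟫ = 0) :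
    SDPFeasible r E
      (fun I => if I ⊆ S then ehat else if I ⊆ Sᶜ then x I else 0) := by
  obtain ⟨h1, h2, h3, h4, h5⟩ := hx
  have hee : ⟪ehat, ehat⟫ = (1 : ℝ) := by
    rw [real_inner_self_eq_norm_sq, hehat]; norm_num
  have hsq : ∀ y : H, ⟪y, y⟫ = ‖y‖ ^ 2 := fun y => real_inner_self_eq_norm_sq y
  -- a nonempty set cannot be in both S and Sᶜ
  have hboth : ∀ {I : Finset V}, I.Nonempty → I ⊆ S → I ⊆ Sᶜ → False := by
    rintro I ⟨a, ha⟩ hIS hIc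
    exact (Finset.mem_compl.mp (hIc ha)) (hIS ha)
  -- norm of a pair is at most 1
  have hpair : ∀ u w : V, ‖x {u, w}‖ ^ 2 ≤ 1 := by
    intro u w
    by_cases huw : u = w
    · subst huw; simp [h1 u]
    · have hcard : ({u, w} : Finset V).card ≤ r + 1 := by
        have : ({u, w} : Finset V).card ≤ 2 := by
          apply le_trans (Finset.card_insert_le _ _); simp
        omega
      have h34 := h4 u {u} {u, w} (Finset.singleton_nonempty u)
        (by intro a ha; simp at ha; subst ha; simp) hcard
      have he1 : ({u} : Finset V) ∪ {u, w} = {u, w} := by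
        ext a; simp
      have he2 := h3 {u} {u, w} (Finset.singleton_nonempty u)
        (by exact ⟨u, by simp⟩) (by rw [he1]; exact hcard)
      rw [he1] at he2
      rw [he2] at h34
      calc ‖x {u, w}‖ ^ 2 ≤ ⟪x {u}, x {u}⟫ := h34
        _ = 1 := by rw [hsq, h1]
  refine ⟨?_, ?_, ?_, ?_, ?_⟩
  · -- unit vectors
    intro i
    by_cases hiS : ({i} : Finset V) ⊆ S
    · simp only [if_pos hiS, hehat, one_pow]
    · have hic : ({i} : Finset V) ⊆ Sᶜ := by
        intro a ha; simp only [Finset.mem_singleton] at ha; subst ha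
        rw [Finset.mem_compl]
        intro h; exact hiS (Finset.singleton_subset_iff.mpr h)
      simp only [if_neg hiS, if_pos hic, h1 i]
  · -- edges
    intro e he
    have hne : ¬ e ⊆ S := hSind e he
    by_cases hec : e ⊆ Sᶜ
    · simp only [if_neg hne, if_pos hec, h2 e he]
    · simp only [if_neg hne, if_neg hec, norm_zero]; norm_num
  · -- consistency
    intro I J hI hJ hcard
    have hIu : I ⊆ I ∪ J := Finset.subset_union_left
    have hJu : J ⊆ I ∪ J := Finset.subset_union_right
    by_cases hIS : I ⊆ S <;> by_cases hJS : J ⊆ S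
    · have hU : I ∪ J ⊆ S := Finset.union_subset hIS hJS
      simp only [if_pos hIS, if_pos hJS, if_pos hU, hee, hehat, one_pow]
    · -- I ⊆ S, J ⊄ S
      have hUS : ¬ I ∪ J ⊆ S := fun h => hJS (hJu.trans h)
      have hUc : ¬ I ∪ J ⊆ Sᶜ := fun h => hboth hI hIS (hIu.trans h)
      by_cases hJc : J ⊆ Sᶜ
      · simp only [if_pos hIS, if_neg hJS, if_pos hJc, if_neg hUS, if_neg hUc,
          norm_zero]
        rw [horth J hJ hJc (le_trans (Finset.card_le_card hJu) hcard)]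
        norm_num
      · simp only [if_pos hIS, if_neg hJS, if_neg hJc, if_neg hUS, if_neg hUc,
          inner_zero_right, norm_zero]
        norm_num
    · -- I ⊄ S, J ⊆ S
      have hUS : ¬ I ∪ J ⊆ S := fun h => hIS (hIu.trans h)
      have hUc : ¬ I ∪ J ⊆ Sᶜ := fun h => hboth hJ hJS (hJu.trans h)
      by_cases hIc : I ⊆ Sᶜ
      · simp only [if_neg hIS, if_pos hIc, if_pos hJS, if_neg hUS, if_neg hUc,
          norm_zero]
        rw [real_inner_comm, horth I hI hIc (le_trans (Finset.card_le_card hIu) hcard)]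
        norm_num
      · simp only [if_neg hIS, if_neg hIc, if_pos hJS, if_neg hUS, if_neg hUc,
          inner_zero_left, norm_zero]
        norm_num
    · -- neither in S
      have hUS : ¬ I ∪ J ⊆ S := fun h => hIS (hIu.trans h)
      by_cases hIc : I ⊆ Sᶜ <;> by_cases hJc : J ⊆ Sᶜ
      · have hUc : I ∪ J ⊆ Sᶜ := Finset.union_subset hIc hJc
        simp only [if_neg hIS, if_pos hIc, if_neg hJS, if_pos hJc, if_neg hUS,
          if_pos hUc]
        exact h3 I J hI hJ hcard
      · have hUc : ¬ I ∪ J ⊆ Sᶜ := fun h => hJc (hJu.trans h)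
        simp only [if_neg hIS, if_pos hIc, if_neg hJS, if_neg hJc, if_neg hUS,
          if_neg hUc, inner_zero_right, norm_zero]
        norm_num
      · have hUc : ¬ I ∪ J ⊆ Sᶜ := fun h => hIc (hIu.trans h)
        simp only [if_neg hIS, if_neg hIc, if_neg hJS, if_pos hJc, if_neg hUS,
          if_neg hUc, inner_zero_left, norm_zero]
        norm_num
      · have hUc : ¬ I ∪ J ⊆ Sᶜ := fun h => hIc (hIu.trans h)
        simp only [if_neg hIS, if_neg hIc, if_neg hJS, if_neg hJc, if_neg hUS,
          if_neg hUc, inner_zero_left, norm_zero]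
        norm_num
  · -- monotonicity
    intro u I J hI hIJ hJcard
    have hJne : J.Nonempty := hI.mono hIJ
    have hIcard : I.card ≤ r + 1 := le_trans (Finset.card_le_card hIJ) hJcard
    by_cases huS : u ∈ S
    · have hu : ({u} : Finset V) ⊆ S := Finset.singleton_subset_iff.mpr huS
      simp only [if_pos hu]
      by_cases hJS : J ⊆ S
      · have hIS : I ⊆ S := hIJ.trans hJS
        simp only [if_pos hJS, if_pos hIS]
        exact le_refl _
      · -- LHS = 0, RHS ≥ 0
        have hL : ⟪ehat, if J ⊆ S then ehat else if J ⊆ Sᶜ then x J else 0⟫ = 0 := by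
          by_cases hJc : J ⊆ Sᶜ
          · simp only [if_neg hJS, if_pos hJc]; exact horth J hJne hJc hJcard
          · simp only [if_neg hJS, if_neg hJc, inner_zero_right]
        have hR : (0:ℝ) ≤ ⟪ehat, if I ⊆ S then ehat else if I ⊆ Sᶜ then x I else 0⟫ := by
          by_cases hIS : I ⊆ S
          · simp only [if_pos hIS, hee]; norm_num
          · by_cases hIc : I ⊆ Sᶜ
            · simp only [if_neg hIS, if_pos hIc, horth I hI hIc hIcard]; rfl
            · simp only [if_neg hIS, if_neg hIc, inner_zero_right]; rfl
        rw [hL]; exact hR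
    · have hu : ¬ ({u} : Finset V) ⊆ S := by
        simp [Finset.singleton_subset_iff, huS]
      have huc : ({u} : Finset V) ⊆ Sᶜ := by
        simp [Finset.singleton_subset_iff, huS]
      simp only [if_neg hu, if_pos huc]
      by_cases hJS : J ⊆ S
      · have hIS : I ⊆ S := hIJ.trans hJS
        simp only [if_pos hJS, if_pos hIS]
        exact le_refl _
      · by_cases hJc : J ⊆ Sᶜ
        · have hIc : I ⊆ Sᶜ := hIJ.trans hJc
          have hIS : ¬ I ⊆ S := fun h => hboth hI h hIc
          simp only [if_neg hJS, if_pos hJc, if_neg hIS, if_pos hIc]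
          exact h4 u I J hI hIJ hJcard
        · -- J mixed : LHS = 0
          simp only [if_neg hJS, if_neg hJc, inner_zero_right]
          by_cases hIS : I ⊆ S
          · simp only [if_pos hIS]
            rw [real_inner_comm, horth {u} (Finset.singleton_nonempty u) huc
              (by simp)]
          · by_cases hIc : I ⊆ Sᶜ
            · simp only [if_neg hIS, if_pos hIc]
              -- I ⊊ J so card I ≤ r
              have hne : I ≠ J := fun h => hJc (h ▸ hIc)
              have hlt : I.card < J.card :=
                Finset.card_lt_card (lt_of_le_of_ne hIJ hne)
              have hcardu : (({u} : Finset V) ∪ I).card ≤ r + 1 := by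
                have := Finset.card_union_le ({u} : Finset V) I
                simp only [Finset.card_singleton] at this
                omega
              rw [h3 {u} I (Finset.singleton_nonempty u) hI hcardu]
              positivity
            · simp only [if_neg hIS, if_neg hIc, inner_zero_right]; rfl
  · -- local triangle-like constraint
    intro u v hvinj hvu
    set T : Finset V := insert u (Finset.image v Finset.univ) with hT
    have hsubT : ∀ i : Fin r, ({u, v i} : Finset V) ⊆ T := by
      intro i a ha
      simp only [Finset.mem_insert, Finset.mem_singleton] at ha
      rcases ha with rfl | rfl
      · exact Finset.mem_insert_self _ _
      · exact Finset.mem_insert_of_mem (Finset.mem_image.mpr ⟨i, Finset.mem_univ i, rfl⟩)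
    have hpairne : ∀ i : Fin r, ({u, v i} : Finset V).Nonempty := fun i => ⟨u, by simp⟩
    -- each term of the new sum is nonnegative
    have hterm : ∀ i : Fin r,
        (0:ℝ) ≤ 1 - ‖if ({u, v i} : Finset V) ⊆ S then ehat
          else if ({u, v i} : Finset V) ⊆ Sᶜ then x {u, v i} else 0‖ ^ 2 := by
      intro i
      by_cases h1' : ({u, v i} : Finset V) ⊆ S
      · simp [h1', hehat]
      · by_cases h2' : ({u, v i} : Finset V) ⊆ Sᶜ
        · simp only [if_neg h1', if_pos h2', sub_nonneg]
          exact hpair u (v i)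
        · simp [h1', h2']
    by_cases hTS : T ⊆ S
    · -- everything inside S
      have hps : ∀ i : Fin r, ({u, v i} : Finset V) ⊆ S := fun i => (hsubT i).trans hTS
      simp only [if_pos hTS, if_pos (hps _), hehat, one_pow, sub_self]
      exact Finset.sum_nonneg fun i _ => by simp [if_pos (hps i), hehat]
    · by_cases hTc : T ⊆ Sᶜ
      · have hpc : ∀ i : Fin r, ({u, v i} : Finset V) ⊆ Sᶜ := fun i => (hsubT i).trans hTc
        have hpns : ∀ i : Fin r, ¬ ({u, v i} : Finset V) ⊆ S :=
          fun i h => hboth (hpairne i) h (hpc i)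
        simp only [if_neg hTS, if_pos hTc]
        calc 1 - ‖x T‖ ^ 2 ≤ ∑ i : Fin r, (1 - ‖x {u, v i}‖ ^ 2) := h5 u v hvinj hvu
          _ = _ := by
              apply Finset.sum_congr rfl
              intro i _
              rw [if_neg (hpns i), if_pos (hpc i)]
      · -- T mixed: LHS = 1, find a mixed pair
        simp only [if_neg hTS, if_neg hTc, norm_zero]
        have : ∃ j : Fin r, ¬ ({u, v j} : Finset V) ⊆ S ∧ ¬ ({u, v j} : Finset V) ⊆ Sᶜ := by
          by_cases huS : u ∈ S
          · obtain ⟨a, haT, haS⟩ := Finset.not_subset.mp hTS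
            have hau : a ≠ u := fun h => haS (h ▸ huS)
            obtain ⟨j, _, rfl⟩ : ∃ j ∈ Finset.univ, v j = a := by
              have := Finset.mem_insert.mp haT
              rcases this with h | h
              · exact absurd h hau
              · exact Finset.mem_image.mp h
            refine ⟨j, fun h => haS (h (by simp)), fun h => ?_⟩
            exact Finset.mem_compl.mp (h (Finset.mem_insert_self _ _)) huS
          · obtain ⟨a, haT, haS⟩ := Finset.not_subset.mp hTc
            have haS' : a ∈ S := by
              by_contra h; exact haS (Finset.mem_compl.mpr h)
            have hau : a ≠ u := fun h => huS (h ▸ haS')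
            obtain ⟨j, _, rfl⟩ : ∃ j ∈ Finset.univ, v j = a := by
              have := Finset.mem_insert.mp haT
              rcases this with h | h
              · exact absurd h hau
              · exact Finset.mem_image.mp h
            refine ⟨j, fun h => huS (h (Finset.mem_insert_self _ _)), fun h => ?_⟩
            exact Finset.mem_compl.mp (h (by simp)) haS'
        obtain ⟨j, hj1, hj2⟩ := this
        have hjval : (1:ℝ) - ‖if ({u, v j} : Finset V) ⊆ S then ehat
            else if ({u, v j} : Finset V) ⊆ Sᶜ then x {u, v j} else 0‖ ^ 2 = 1 := by
          simp [hj1, hj2]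
        calc (1:ℝ) - 0 ^ 2 = 1 := by norm_num
          _ ≤ ∑ i : Fin r, (1 - ‖if ({u, v i} : Finset V) ⊆ S then ehat
              else if ({u, v i} : Finset V) ⊆ Sᶜ then x {u, v i} else 0‖ ^ 2) := by
              have hs := Finset.single_le_sum (fun i _ => hterm i) (Finset.mem_univ j)
              rw [hjval] at hs
              exact hs
end

section
/- Let r, n, k be integers with r ≥ 2, k ≥ 1, and n ≥ k+1. Then Σ_{i=1}^{r−1} C(k, i)·C(n−k, r−i) ≤ (4e)^{r−2}·k·n^{r−1}/r^{r−2}, where C(m,i) denotes the binomial coefficient and e is Euler's number. -/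
open Finset Nat

lemma aux_pow_le_exp_mul_factorial (t : ℕ) :
    (t : ℝ) ^ t ≤ Real.exp 1 ^ t * t ! := by
  have h1 : (t : ℝ) ^ t / t ! ≤ Real.exp t := by
    calc (t : ℝ) ^ t / t ! ≤ ∑ i ∈ range (t + 1), (t : ℝ) ^ i / i ! :=
          Finset.single_le_sum (f := fun i => (t : ℝ) ^ i / i !) (fun i _ => by positivity)
            (Finset.self_mem_range_succ t)
      _ ≤ Real.exp t := Real.sum_le_exp_of_nonneg (by positivity) _
  have h2 : Real.exp (t : ℝ) = Real.exp 1 ^ t := by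
    rw [← Real.exp_nat_mul, mul_one]
  have hf : (0 : ℝ) < t ! := by positivity
  rw [div_le_iff₀ hf, h2] at h1
  exact h1

lemma aux_key (r : ℕ) (hr : 3 ≤ r) :
    (2 : ℝ) ^ r / r ! ≤ (4 * Real.exp 1) ^ (r - 2) / (r : ℝ) ^ (r - 2) := by
  have he1 : (1 : ℝ) ≤ Real.exp 1 := Real.one_le_exp (by norm_num)
  have he3 : Real.exp 1 ≤ 3 := le_of_lt (lt_of_lt_of_le Real.exp_one_lt_d9 (by norm_num))
  rw [div_le_div_iff₀ (by positivity) (by positivity)]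
  rcases eq_or_lt_of_le hr with h3 | h4
  · subst h3
    norm_num [Nat.factorial]
    nlinarith [he1]
  · obtain ⟨s, rfl⟩ : ∃ s, r = s + 4 := ⟨r - 4, by omega⟩
    have hsub : s + 4 - 2 = s + 2 := by omega
    rw [hsub]
    set E := Real.exp 1 with hE
    have hE0 : (0 : ℝ) < E := Real.exp_pos 1
    have A : ((s + 4 : ℕ) : ℝ) ^ (s + 4) ≤ E ^ (s + 4) * (s + 4)! :=
      aux_pow_le_exp_mul_factorial (s + 4)
    set a : ℝ := ((s + 4 : ℕ) : ℝ) ^ (s + 2) with ha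
    set b : ℝ := ((s + 4 : ℕ) : ℝ) ^ 2 with hb
    have hab : ((s + 4 : ℕ) : ℝ) ^ (s + 4) = a * b := by rw [ha, hb, ← pow_add]
    have A' : a * b ≤ E ^ (s + 2) * E ^ 2 * (s + 4)! := by
      rw [← hab]
      calc ((s + 4 : ℕ) : ℝ) ^ (s + 4) ≤ E ^ (s + 4) * (s + 4)! := A
        _ = E ^ (s + 2) * E ^ 2 * (s + 4)! := by rw [← pow_add]
    have ha0 : (0 : ℝ) ≤ a := by positivity
    have hb16 : (16 : ℝ) ≤ b := by
      rw [hb]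
      have h4le : (4 : ℝ) ≤ ((s + 4 : ℕ) : ℝ) := by exact_mod_cast Nat.le_add_left 4 s
      nlinarith
    have D : (9 : ℝ) * 2 ^ (s + 4) ≤ 4 ^ (s + 2) * b := by
      have h24 : (2 : ℝ) ^ s ≤ 4 ^ s := pow_le_pow_left₀ (by norm_num) (by norm_num) s
      have h2pos : (0 : ℝ) < 2 ^ s := by positivity
      have hmm : (2 : ℝ) ^ s * 16 ≤ 4 ^ s * b :=
        mul_le_mul h24 hb16 (by norm_num) (by positivity)
      rw [pow_add, pow_add]
      nlinarith [hmm, h2pos]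
    -- goal : 2 ^ (s + 4) * a ≤ (4 * E) ^ (s + 2) * (s + 4)!
    have hE2 : (0 : ℝ) < E ^ 2 := by positivity
    rw [← mul_le_mul_iff_right₀ hE2]
    have hE9 : E ^ 2 ≤ 9 := by nlinarith
    calc E ^ 2 * (2 ^ (s + 4) * a) ≤ 9 * (2 ^ (s + 4) * a) :=
          mul_le_mul_of_nonneg_right hE9 (by positivity)
      _ = (9 * 2 ^ (s + 4)) * a := by ring
      _ ≤ (4 ^ (s + 2) * b) * a := mul_le_mul_of_nonneg_right D ha0
      _ = 4 ^ (s + 2) * (a * b) := by ring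
      _ ≤ 4 ^ (s + 2) * (E ^ (s + 2) * E ^ 2 * (s + 4)!) := by
          exact mul_le_mul_of_nonneg_left A' (by positivity)
      _ = E ^ 2 * ((4 * E) ^ (s + 2) * (s + 4)!) := by rw [mul_pow]; ring

theorem stmt_18 (r n k : ℕ) (hr : 2 ≤ r) (hk : 1 ≤ k) (hn : k + 1 ≤ n) :
    ∑ i ∈ Finset.Icc 1 (r - 1), ((k.choose i : ℕ) : ℝ) * (((n - k).choose (r - i) : ℕ) : ℝ) ≤
      (4 * Real.exp 1) ^ (r - 2) * (k : ℝ) * (n : ℝ) ^ (r - 1) / (r : ℝ) ^ (r - 2) := by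
  have hkn : (k : ℝ) ≤ (n : ℝ) := by exact_mod_cast Nat.le_of_succ_le hn
  have hk0 : (0 : ℝ) ≤ (k : ℝ) := by positivity
  have hn0 : (0 : ℝ) ≤ (n : ℝ) := by positivity
  rcases eq_or_lt_of_le hr with h2 | h3
  · -- r = 2
    subst h2
    simp only [show (2 : ℕ) - 1 = 1 from rfl, Finset.Icc_self, Finset.sum_singleton,
      Nat.choose_one_right, show (2 : ℕ) - 2 = 0 from rfl, pow_zero, pow_one, one_mul, div_one]
    have h : ((n - k : ℕ) : ℝ) ≤ (n : ℝ) := by exact_mod_cast Nat.sub_le n k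
    exact mul_le_mul_of_nonneg_left h hk0
  · -- r ≥ 3
    have hr3 : 3 ≤ r := h3
    have hterm : ∀ i ∈ Finset.Icc 1 (r - 1),
        ((k.choose i : ℕ) : ℝ) * (((n - k).choose (r - i) : ℕ) : ℝ) ≤
          (k : ℝ) * (n : ℝ) ^ (r - 1) * ((r.choose i : ℕ) : ℝ) / r ! := by
      intro i hi
      rw [Finset.mem_Icc] at hi
      obtain ⟨hi1, hi2⟩ := hi
      have hir : i ≤ r := by omega
      have h1 : ((k.choose i : ℕ) : ℝ) ≤ (k : ℝ) ^ i / i ! := Nat.choose_le_pow_div i k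
      have h2 : (((n - k).choose (r - i) : ℕ) : ℝ) ≤ (n : ℝ) ^ (r - i) / (r - i)! := by
        refine (Nat.choose_le_pow_div (r - i) (n - k)).trans ?_
        have hnk : ((n - k : ℕ) : ℝ) ≤ (n : ℝ) := by exact_mod_cast Nat.sub_le n k
        gcongr
      have hki : (k : ℝ) ^ i ≤ (k : ℝ) * (n : ℝ) ^ (i - 1) := by
        calc (k : ℝ) ^ i = (k : ℝ) ^ (i - 1) * (k : ℝ) := by
              rw [← pow_succ]; congr 1; omega
          _ ≤ (n : ℝ) ^ (i - 1) * (k : ℝ) :=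
              mul_le_mul_of_nonneg_right (pow_le_pow_left₀ hk0 hkn _) hk0
          _ = (k : ℝ) * (n : ℝ) ^ (i - 1) := by ring
      have hpow : (n : ℝ) ^ (i - 1) * (n : ℝ) ^ (r - i) = (n : ℝ) ^ (r - 1) := by
        rw [← pow_add]; congr 1; omega
      have hprod : ((k.choose i : ℕ) : ℝ) * (((n - k).choose (r - i) : ℕ) : ℝ) ≤
          ((k : ℝ) ^ i / i !) * ((n : ℝ) ^ (r - i) / (r - i)!) :=
        mul_le_mul h1 h2 (by positivity) (by positivity)
      refine hprod.trans ?_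
      have hcast : ((r.choose i : ℕ) : ℝ) = r ! / (i ! * (r - i)!) := Nat.cast_choose ℝ hir
      rw [hcast]
      have hi0 : (0 : ℝ) < i ! := by positivity
      have hri0 : (0 : ℝ) < (r - i)! := by positivity
      have hr0 : (0 : ℝ) < (r ! : ℝ) := by positivity
      have hgoal_eq : (k : ℝ) * (n : ℝ) ^ (r - 1) * ((r ! : ℝ) / (i ! * (r - i)!)) / r !
          = (k : ℝ) * (n : ℝ) ^ (r - 1) / (i ! * (r - i)!) := by
        field_simp
      rw [hgoal_eq, _root_.div_mul_div_comm]
      have key : (k : ℝ) ^ i * (n : ℝ) ^ (r - i) ≤ (k : ℝ) * (n : ℝ) ^ (r - 1) := by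
        calc (k : ℝ) ^ i * (n : ℝ) ^ (r - i) ≤ ((k : ℝ) * (n : ℝ) ^ (i - 1)) * (n : ℝ) ^ (r - i) :=
              mul_le_mul_of_nonneg_right hki (by positivity)
          _ = (k : ℝ) * ((n : ℝ) ^ (i - 1) * (n : ℝ) ^ (r - i)) := by ring
          _ = (k : ℝ) * (n : ℝ) ^ (r - 1) := by rw [hpow]
      gcongr
    have hsumchoose : ∑ i ∈ Finset.Icc 1 (r - 1), ((r.choose i : ℕ) : ℝ) ≤ 2 ^ r := by
      have hnat : ∑ i ∈ Finset.Icc 1 (r - 1), r.choose i ≤ 2 ^ r := by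
        calc ∑ i ∈ Finset.Icc 1 (r - 1), r.choose i
            ≤ ∑ i ∈ Finset.range (r + 1), r.choose i := by
              apply Finset.sum_le_sum_of_subset
              intro x hx
              rw [Finset.mem_Icc] at hx
              rw [Finset.mem_range]
              omega
          _ = 2 ^ r := Nat.sum_range_choose r
      calc ∑ i ∈ Finset.Icc 1 (r - 1), ((r.choose i : ℕ) : ℝ)
          = ((∑ i ∈ Finset.Icc 1 (r - 1), r.choose i : ℕ) : ℝ) := by push_cast; ring
        _ ≤ ((2 ^ r : ℕ) : ℝ) := by exact_mod_cast hnat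
        _ = 2 ^ r := by push_cast; ring
    have hmain : ∑ i ∈ Finset.Icc 1 (r - 1),
        ((k.choose i : ℕ) : ℝ) * (((n - k).choose (r - i) : ℕ) : ℝ) ≤
        (k : ℝ) * (n : ℝ) ^ (r - 1) * (2 ^ r / r !) := by
      calc ∑ i ∈ Finset.Icc 1 (r - 1), ((k.choose i : ℕ) : ℝ) * (((n - k).choose (r - i) : ℕ) : ℝ)
          ≤ ∑ i ∈ Finset.Icc 1 (r - 1), (k : ℝ) * (n : ℝ) ^ (r - 1) * ((r.choose i : ℕ) : ℝ) / r ! :=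
            Finset.sum_le_sum hterm
        _ = (k : ℝ) * (n : ℝ) ^ (r - 1) / r ! * ∑ i ∈ Finset.Icc 1 (r - 1), ((r.choose i : ℕ) : ℝ) := by
            rw [Finset.mul_sum]; apply Finset.sum_congr rfl; intro i _; ring
        _ ≤ (k : ℝ) * (n : ℝ) ^ (r - 1) / r ! * 2 ^ r := by
            exact mul_le_mul_of_nonneg_left hsumchoose (by positivity)
        _ = (k : ℝ) * (n : ℝ) ^ (r - 1) * (2 ^ r / r !) := by ring
    refine hmain.trans ?_
    have hkey := aux_key r hr3
    calc (k : ℝ) * (n : ℝ) ^ (r - 1) * (2 ^ r / r !)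
        ≤ (k : ℝ) * (n : ℝ) ^ (r - 1) * ((4 * Real.exp 1) ^ (r - 2) / (r : ℝ) ^ (r - 2)) := by
          exact mul_le_mul_of_nonneg_left hkey (by positivity)
      _ = (4 * Real.exp 1) ^ (r - 2) * (k : ℝ) * (n : ℝ) ^ (r - 1) / (r : ℝ) ^ (r - 2) := by ring
end

section
/- Let r, n, k be integers with r ≥ 2, 1 ≤ k ≤ n/2, and n ≥ 2(r−1). Then Σ_{i=1}^{r−1} C(k, i)·C(n−k, r−i) ≥ k·(n/(2r))^{r−1}, where C(m,i) denotes the binomial coefficient. -/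
open Finset

lemma aux_pow_div_le_choose : ∀ (j m : ℕ), j ≤ m → ((m : ℝ) / j) ^ j ≤ m.choose j := by
  intro j
  induction j with
  | zero => intro m _; simp
  | succ j ih =>
    intro m hm
    obtain ⟨m', rfl⟩ : ∃ m', m = m' + 1 := ⟨m - 1, by omega⟩
    have hjm : j ≤ m' := by omega
    have h1 : (((m' : ℝ) + 1) / ((j : ℝ) + 1)) ^ j ≤ ((m' : ℝ) / j) ^ j := by
      rcases Nat.eq_zero_or_pos j with h | h
      · simp [h]
      · apply pow_le_pow_left₀ (by positivity)
        rw [div_le_div_iff₀ (by positivity) (by exact_mod_cast h)]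
        have hj' : (j : ℝ) ≤ m' := by exact_mod_cast hjm
        nlinarith
    have h2 : ((m' : ℝ) / j) ^ j ≤ m'.choose j := ih m' hjm
    have key : (((m' + 1).choose (j + 1) : ℕ) : ℝ) = ((m' : ℝ) + 1) / ((j : ℝ) + 1) * m'.choose j := by
      have h := Nat.add_one_mul_choose_eq m' j
      have h' : ((m' : ℝ) + 1) * m'.choose j = ((m' + 1).choose (j + 1) : ℝ) * ((j : ℝ) + 1) := by
        exact_mod_cast congrArg (Nat.cast : ℕ → ℝ) h
      field_simp
      linarith
    have hfac : (0 : ℝ) ≤ ((m' : ℝ) + 1) / ((j : ℝ) + 1) := by positivity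
    rw [key]
    push_cast
    calc (((m' : ℝ) + 1) / ((j : ℝ) + 1)) ^ (j + 1)
        = ((m' : ℝ) + 1) / ((j : ℝ) + 1) * (((m' : ℝ) + 1) / ((j : ℝ) + 1)) ^ j := by ring
      _ ≤ ((m' : ℝ) + 1) / ((j : ℝ) + 1) * (m'.choose j) :=
          mul_le_mul_of_nonneg_left (h1.trans h2) hfac

theorem stmt_19 (r n k : ℕ) (hr : 2 ≤ r) (hk1 : 1 ≤ k) (hk2 : 2 * k ≤ n)
    (hn : 2 * (r - 1) ≤ n) :
    (k : ℝ) * ((n : ℝ) / (2 * (r : ℝ))) ^ (r - 1) ≤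
      ∑ i ∈ Finset.Icc 1 (r - 1), ((k.choose i : ℕ) : ℝ) * (((n - k).choose (r - i) : ℕ) : ℝ) := by
  have hkn : k ≤ n := by omega
  have hrn : r - 1 ≤ n - k := by omega
  have hmem : 1 ∈ Finset.Icc 1 (r - 1) := by
    simp only [Finset.mem_Icc]; omega
  have hterm : ((k.choose 1 : ℕ) : ℝ) * (((n - k).choose (r - 1) : ℕ) : ℝ) ≤
      ∑ i ∈ Finset.Icc 1 (r - 1), ((k.choose i : ℕ) : ℝ) * (((n - k).choose (r - i) : ℕ) : ℝ) :=
    Finset.single_le_sum (f := fun i => ((k.choose i : ℕ) : ℝ) * (((n - k).choose (r - i) : ℕ) : ℝ))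
      (fun i _ => by positivity) hmem
  refine le_trans ?_ hterm
  rw [Nat.choose_one_right]
  have hchoose : ((n : ℝ) / (2 * (r : ℝ))) ^ (r - 1) ≤ ((n - k).choose (r - 1) : ℝ) := by
    refine le_trans ?_ (aux_pow_div_le_choose (r - 1) (n - k) hrn)
    apply pow_le_pow_left₀ (by positivity)
    rw [div_le_div_iff₀ (by positivity) (by exact_mod_cast (by omega : 0 < r - 1))]
    have e1 : ((n - k : ℕ) : ℝ) = (n : ℝ) - k := by push_cast [hkn]; ring
    have e2 : ((r - 1 : ℕ) : ℝ) = (r : ℝ) - 1 := by push_cast [show 1 ≤ r by omega]; ring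
    rw [e1, e2]
    have h2k : 2 * (k : ℝ) ≤ n := by exact_mod_cast hk2
    have hr' : (2 : ℝ) ≤ r := by exact_mod_cast hr
    have hn0 : (0 : ℝ) ≤ n := Nat.cast_nonneg n
    nlinarith
  calc (k : ℝ) * ((n : ℝ) / (2 * (r : ℝ))) ^ (r - 1)
      ≤ (k : ℝ) * ((n - k).choose (r - 1) : ℝ) :=
        mul_le_mul_of_nonneg_left hchoose (Nat.cast_nonneg k)
    _ = _ := by norm_num
end
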